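/- arXiv:2101.08989 — 6 statements merged into one kernel-verified Lean document; each statement's English description precedes it below -/
import Mathlib

section
/- Let α be a real algebraic number greater than 1 and of degree d ≥ 1, and let C(α) be defined as in the context. If α^n is not an integer for any positive integer n, then ‖α^n‖ ≥ 3^(−(d−1)) · C(α)^(−n) for every positive integer n; in general, the inequality ‖α^n‖ ≥ 3^(−(d−1)) · C(α)^(−n) holds for every positive integer n such that α^n is not an integer. -/
/-- The distance from a real number to the nearest integer:
`‖x‖ = min { |x - m| : m ∈ ℤ }`. -/
noncomputable def distToNearestInt (x : ℝ) : ℝ := |x - round x|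

/-- For a real algebraic number `α > 1` of degree `d` with minimal polynomial `f` over `ℤ`
(primitive, positive leading coefficient), having leading coefficient `a_d` and complex
roots `α₁, …, α_d`, this is `C(α) = a_d · α^(d-1) · ∏ (|α_i| / α)`, the product taken
over the roots `α_i` with `|α_i| > α` (an empty product equals `1`). -/
noncomputable def Calpha (α : ℝ) (f : Polynomial ℤ) : ℝ :=
  (f.leadingCoeff : ℝ) * α ^ (f.natDegree - 1) *
    (((f.map (Int.castRingHom ℂ)).roots.filter (fun z => α < ‖z‖)).map
      (fun z => ‖z‖ / α)).prod

open Polynomial Matrix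

section aux

variable {R : Type*} [CommRing R]

def cycMat (n : ℕ) (m r : R) : Matrix (Fin n) (Fin n) R := fun i j =>
  (if (i : ℕ) = (j : ℕ) + 1 then 1 else 0) +
  (if (i : ℕ) = 0 ∧ (j : ℕ) = n - 1 then m else 0) +
  (if i = j then -r else 0)

theorem det_cycMat (n : ℕ) (hn : 0 < n) (m r : R) :
    (cycMat n m r).det = (-1) ^ n * (r ^ n - m) := by
  obtain ⟨k, rfl⟩ := Nat.exists_eq_succ_of_ne_zero hn.ne'
  induction k with
  | zero =>
    rw [Matrix.det_fin_one]
    simp [cycMat]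
    ring
  | succ k _ =>
    have h0last : (0 : Fin (k+2)) ≠ Fin.last (k+1) := by
      simp [Fin.ext_iff]
    rw [Matrix.det_succ_row_zero]
    have hzero : ∀ x ∈ (Finset.univ : Finset (Fin (k+2))),
        x ∉ ({0, Fin.last (k+1)} : Finset (Fin (k+2))) →
        (-1 : R)^(x:ℕ) * cycMat (k+2) m r 0 x *
          ((cycMat (k+2) m r).submatrix Fin.succ x.succAbove).det = 0 := by
      intro x _ hx
      simp only [Finset.mem_insert, Finset.mem_singleton] at hx
      push_neg at hx
      have h1 : (x:ℕ) ≠ 0 := fun h => hx.1 (Fin.ext (by simp [h]))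
      have h2 : (x:ℕ) ≠ k+1 := fun h => hx.2 (Fin.ext (by simp [h]))
      have hx0 : cycMat (k+2) m r 0 x = 0 := by
        simp [cycMat, h1, h2, Fin.ext_iff]
        intro h; exact absurd h.symm h1
      rw [hx0]; ring
    rw [← Finset.sum_subset (Finset.subset_univ _) hzero, Finset.sum_pair h0last]
    have e00 : cycMat (k+2) m r 0 0 = -r := by simp [cycMat]
    have e0l : cycMat (k+2) m r 0 (Fin.last (k+1)) = m := by
      simp [cycMat, Fin.ext_iff, Fin.last]
    have d0 : ((cycMat (k+2) m r).submatrix Fin.succ ((0:Fin (k+2)).succAbove)).det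
        = (-r)^(k+1) := by
      rw [Matrix.det_of_lowerTriangular _ ?h]
      case h =>
        intro i j hij
        have hij' : i < j := hij
        simp only [Matrix.submatrix_apply, Fin.succAbove_zero, cycMat]
        have c1 : ((i.succ : Fin (k+2)) : ℕ) ≠ ((j.succ : Fin (k+2)) : ℕ) + 1 := by
          simp only [Fin.val_succ]
          omega
        have c3 : (i.succ : Fin (k+2)) ≠ j.succ := by
          simpa [Fin.ext_iff] using (by omega : (i:ℕ) + 1 ≠ (j:ℕ) + 1)
        have c0 : (i:ℕ) ≠ (j:ℕ) + 1 := by omega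
        simp [c1, c3, c0, Fin.val_succ]
      · rw [Finset.prod_congr rfl (g := fun _ => -r) ?_, Finset.prod_const,
          Finset.card_univ, Fintype.card_fin]
        intro i _
        simp [cycMat, Fin.val_succ]
    have dl : ((cycMat (k+2) m r).submatrix Fin.succ ((Fin.last (k+1)).succAbove)).det
        = 1 := by
      rw [Matrix.det_of_upperTriangular ?h]
      case h =>
        intro i j hij
        have hij' : (j : Fin (k+1)) < i := hij
        simp only [Matrix.submatrix_apply, Fin.succAbove_last, cycMat]
        have c1 : ((i.succ : Fin (k+2)) : ℕ) ≠ ((j.castSucc : Fin (k+2)) : ℕ) + 1 := by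
          simp only [Fin.val_succ, Fin.coe_castSucc]
          omega
        have c3 : (i.succ : Fin (k+2)) ≠ j.castSucc := by
          simp [Fin.ext_iff]
          omega
        have c0 : (i:ℕ) ≠ (j:ℕ) := by omega
        simp [c1, c3, c0]
      · rw [Finset.prod_congr rfl (g := fun _ => 1) ?_, Finset.prod_const, one_pow]
        intro i _
        have c3 : (i.succ : Fin (k+2)) ≠ i.castSucc := by
          simpa [Fin.ext_iff] using (by omega : (i:ℕ) + 1 ≠ (i:ℕ))
        simp [cycMat, c3]
    rw [e00, e0l, d0, dl, Fin.val_last]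
    have hnr : (-r)^(k+1) = (-1)^(k+1) * r^(k+1) := by rw [neg_pow]
    simp only [Fin.val_zero, pow_zero, mul_one, one_mul, hnr, pow_succ]
    ring

theorem det_aeval_multiset {k : ℕ} (B : Matrix (Fin k) (Fin k) ℂ) (s : Multiset ℂ) :
    ((Polynomial.aeval B) (s.map fun a => (X : ℂ[X]) - C a).prod).det
      = (s.map fun r => (B - r • 1).det).prod := by
  induction s using Multiset.induction with
  | empty => simp
  | cons a t ih =>
    have h : (Polynomial.aeval B) ((X : ℂ[X]) - C a) = B - a • 1 := by
      rw [map_sub, aeval_X, aeval_C, Algebra.algebraMap_eq_smul_one]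
    simp only [Multiset.map_cons, Multiset.prod_cons, _root_.map_mul, Matrix.det_mul, ih, h]

theorem det_aeval_splits {k : ℕ} (B : Matrix (Fin k) (Fin k) ℂ) (g : ℂ[X]) :
    ((Polynomial.aeval B) g).det
      = g.leadingCoeff ^ k * (g.roots.map fun r => (B - r • 1).det).prod := by
  conv_lhs => rw [(IsAlgClosed.splits g).eq_prod_roots]
  rw [_root_.map_mul, aeval_C, Algebra.algebraMap_eq_smul_one, smul_mul_assoc, one_mul,
    Matrix.det_smul, det_aeval_multiset, Fintype.card_fin]

theorem multiset_prod_map_nonneg {β : Type*} {s : Multiset β} {g : β → ℝ}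
    (hg : ∀ x ∈ s, 0 ≤ g x) : 0 ≤ (s.map g).prod := by
  induction s using Multiset.induction with
  | empty => simp
  | cons a t ih =>
    simp only [Multiset.map_cons, Multiset.prod_cons]
    exact mul_nonneg (hg a (Multiset.mem_cons_self a t))
      (ih fun x hx => hg x (Multiset.mem_cons_of_mem hx))

theorem multiset_prod_map_pos {β : Type*} {s : Multiset β} {g : β → ℝ}
    (hg : ∀ x ∈ s, 0 < g x) : 0 < (s.map g).prod := by
  induction s using Multiset.induction with
  | empty => simp
  | cons a t ih =>
    simp only [Multiset.map_cons, Multiset.prod_cons]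
    exact mul_pos (hg a (Multiset.mem_cons_self a t))
      (ih fun x hx => hg x (Multiset.mem_cons_of_mem hx))

theorem multiset_prod_map_le {β : Type*} {s : Multiset β} {g h : β → ℝ}
    (hg : ∀ x ∈ s, 0 ≤ g x) (hgh : ∀ x ∈ s, g x ≤ h x) :
    (s.map g).prod ≤ (s.map h).prod := by
  induction s using Multiset.induction with
  | empty => simp
  | cons a t ih =>
    simp only [Multiset.map_cons, Multiset.prod_cons]
    have h0 : 0 ≤ (t.map g).prod :=
      multiset_prod_map_nonneg fun x hx => hg x (Multiset.mem_cons_of_mem hx)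
    have ha : 0 ≤ g a := hg a (Multiset.mem_cons_self a t)
    exact mul_le_mul (hgh a (Multiset.mem_cons_self a t))
      (ih (fun x hx => hg x (Multiset.mem_cons_of_mem hx))
        (fun x hx => hgh x (Multiset.mem_cons_of_mem hx)))
      h0 (le_trans ha (hgh a (Multiset.mem_cons_self a t)))

/-- conjugation principle: if a complex root of `f` has `r ^ n` an integer,
then `α ^ n` is that same integer. -/
theorem conj_pow_eq (α : ℝ) (f : Polynomial ℤ) (hf0 : f ≠ 0)
    (hfroot : Polynomial.aeval α f = 0)
    (hdeg : f.natDegree = (minpoly ℚ α).natDegree)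
    {r : ℂ} (hr : r ∈ (f.map (Int.castRingHom ℂ)).roots)
    {n : ℕ} {m : ℤ} (hrm : r ^ n = (m : ℂ)) : α ^ n = (m : ℝ) := by
  have hQinj : Function.Injective (Int.castRingHom ℚ) := Int.cast_injective
  set fq : ℚ[X] := f.map (Int.castRingHom ℚ) with hfqdef
  have hfq0 : fq ≠ 0 := (Polynomial.map_ne_zero_iff hQinj).mpr hf0
  have hfqroot : Polynomial.aeval α fq = 0 := by
    rw [hfqdef, ← algebraMap_int_eq, aeval_map_algebraMap]; exact hfroot
  have halg : IsIntegral ℚ α := (IsAlgebraic.isIntegral ⟨fq, hfq0, hfqroot⟩)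
  set p := minpoly ℚ α with hpdef
  have hirr : Irreducible p := minpoly.irreducible halg
  have hp0 : p ≠ 0 := minpoly.ne_zero halg
  obtain ⟨q, hq⟩ := minpoly.dvd ℚ α hfqroot
  have hq0 : q ≠ 0 := by rintro rfl; rw [mul_zero] at hq; exact hfq0 hq
  have hdeg' : fq.natDegree = p.natDegree := by
    rw [hfqdef, Polynomial.natDegree_map_eq_of_injective hQinj, hdeg]
  have hqdeg : q.natDegree = 0 := by
    have h2 := Polynomial.natDegree_mul hp0 hq0
    rw [← hq, hdeg'] at h2; omega
  obtain ⟨c, rfl⟩ : ∃ c : ℚ, q = C c := ⟨q.coeff 0, Polynomial.eq_C_of_natDegree_eq_zero hqdeg⟩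
  have hc0 : c ≠ 0 := fun h => hq0 (by rw [h, map_zero])
  have hmapeq : f.map (Int.castRingHom ℂ) = (p.map (algebraMap ℚ ℂ)) * C ((c : ℂ)) := by
    have hcomp : (Int.castRingHom ℂ) = (algebraMap ℚ ℂ).comp (Int.castRingHom ℚ) := by
      ext x; simp
    rw [hcomp, ← Polynomial.map_map, ← hfqdef, hq, Polynomial.map_mul, Polynomial.map_C]
    rfl
  have hrp : Polynomial.aeval r p = 0 := by
    have hmem : r ∈ (p.map (algebraMap ℚ ℂ)).roots := by
      rw [hmapeq, mul_comm, Polynomial.roots_C_mul _ (by exact_mod_cast hc0)] at hr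
      exact hr
    have h3 := Polynomial.isRoot_of_mem_roots hmem
    rwa [Polynomial.IsRoot, Polynomial.eval_map, ← Polynomial.aeval_def] at h3
  haveI : Fact (Irreducible p) := ⟨hirr⟩
  have hrp' : p.eval₂ (↑(Algebra.ofId ℚ ℂ) : ℚ →+* ℂ) r = 0 := by simpa [aeval_def] using hrp
  have hφx : (AdjoinRoot.liftAlgHom p (Algebra.ofId ℚ ℂ) r hrp') ((AdjoinRoot.root p) ^ n - (m : AdjoinRoot p)) = 0 := by
    rw [map_sub, map_pow, map_intCast, AdjoinRoot.liftAlgHom_root, hrm, sub_self]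
  have hinj : Function.Injective (AdjoinRoot.liftAlgHom p (Algebra.ofId ℚ ℂ) r hrp') := fun a b h =>
    (AdjoinRoot.liftAlgHom p (Algebra.ofId ℚ ℂ) r hrp').toRingHom.injective h
  have hx : (AdjoinRoot.root p) ^ n - (m : AdjoinRoot p) = 0 := by
    apply hinj
    rw [hφx, map_zero]
  have h4 := congrArg (AdjoinRoot.liftAlgHom p (Algebra.ofId ℚ ℝ) α (show p.eval₂ (↑(Algebra.ofId ℚ ℝ) : ℚ →+* ℝ) α = 0 from by
    simpa [aeval_def] using minpoly.aeval ℚ α)) hx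
  rw [map_sub, map_pow, map_zero, map_intCast, AdjoinRoot.liftAlgHom_root] at h4
  linarith [h4]

end aux

/-- Liouville-type bound: for a real algebraic number `α > 1` of degree `d ≥ 1`, one has
`‖α^n‖ ≥ 3^(-(d-1)) · C(α)^(-n)` for every positive integer `n` such that `α^n` is
not an integer. -/
theorem liouville_lower_bound_fractional_parts (α : ℝ) (hα1 : 1 < α)
    (d : ℕ) (hd : 1 ≤ d)
    (f : Polynomial ℤ) (hfprim : f.IsPrimitive) (hflead : 0 < f.leadingCoeff)
    (hfroot : Polynomial.aeval α f = 0)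
    (hfdeg : f.natDegree = d) (hmin : d = (minpoly ℚ α).natDegree) :
    ∀ n : ℕ, 0 < n → (¬ ∃ k : ℤ, α ^ n = (k : ℝ)) →
      distToNearestInt (α ^ n) ≥ (3 : ℝ) ^ (-((d : ℤ) - 1)) * (Calpha α f) ^ (-(n : ℤ)) := by
  intro n hn hni
  have hαpos : (0:ℝ) < α := lt_trans one_pos hα1
  have hf0 : f ≠ 0 := fun h => by simp [h] at hflead
  set m : ℤ := round (α ^ n) with hmdef
  have hCinj : Function.Injective (Int.castRingHom ℂ) := Int.cast_injective
  set g : ℂ[X] := f.map (Int.castRingHom ℂ) with hgdef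
  have hg0 : g ≠ 0 := (Polynomial.map_ne_zero_iff hCinj).mpr hf0
  set Rts : Multiset ℂ := g.roots with hRdef
  -- α is a root
  have hαmem : (α : ℂ) ∈ Rts := by
    rw [hRdef, Polynomial.mem_roots hg0]
    have : Polynomial.aeval ((algebraMap ℝ ℂ) α) f = 0 := by
      rw [Polynomial.aeval_algebraMap_apply, hfroot, map_zero]
    rw [Polynomial.IsRoot, hgdef, Polynomial.eval_map]
    rw [← algebraMap_int_eq, ← Polynomial.aeval_def]
    exact this
  -- number of roots
  have hcard : Rts.card = d := by
    rw [hRdef,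
      ← (IsAlgClosed.splits g).natDegree_eq_card_roots, hgdef,
      Polynomial.natDegree_map_eq_of_injective hCinj, hfdeg]
  -- nonvanishing of all factors
  have hne : ∀ r ∈ Rts, r ^ n - (m : ℂ) ≠ 0 := by
    intro r hr hcontr
    exact hni ⟨m, conj_pow_eq α f hf0 hfroot (by rw [hfdeg, hmin]) hr (sub_eq_zero.mp hcontr)⟩
  -- the integer N
  set N : ℤ := ((Polynomial.aeval (cycMat n m 0)) f).det with hNdef
  have hmap : ((Int.castRingHom ℂ).toIntAlgHom.mapMatrix :
      Matrix (Fin n) (Fin n) ℤ →ₐ[ℤ] Matrix (Fin n) (Fin n) ℂ) (cycMat n m 0)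
      = cycMat n (m : ℂ) 0 := by
    ext i j
    simp [cycMat, AlgHom.mapMatrix_apply, Matrix.map_apply, apply_ite (Int.cast : ℤ → ℂ)]
  have hsub : ∀ r : ℂ, cycMat n (m:ℂ) 0 - r • 1 = cycMat n (m:ℂ) r := by
    intro r
    ext i j
    simp only [Matrix.sub_apply, Matrix.smul_apply, Matrix.one_apply, cycMat, smul_ite,
      smul_eq_mul, mul_one, mul_zero]
    split_ifs <;> ring
  have hNC : (N : ℂ) = ((f.leadingCoeff : ℂ)) ^ n *
      (Rts.map fun r => (-1:ℂ)^n * (r ^ n - (m:ℂ))).prod := by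
    have h1 : (N : ℂ) = ((Polynomial.aeval (cycMat n (m:ℂ) 0)) f).det := by
      have h0 : (N : ℂ) = (Int.castRingHom ℂ) (((Polynomial.aeval (cycMat n m 0)) f).det) := rfl
      rw [h0, RingHom.map_det, ← hmap]
      congr 1
      exact (Polynomial.aeval_algHom_apply ((Int.castRingHom ℂ).toIntAlgHom.mapMatrix)
        (cycMat n m 0) f).symm
    rw [h1, ← aeval_map_algebraMap ℂ, algebraMap_int_eq, ← hgdef, det_aeval_splits]
    have hlc : g.leadingCoeff = (f.leadingCoeff : ℂ) := by
      rw [hgdef, Polynomial.leadingCoeff_map_of_injective hCinj]; rfl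
    rw [hlc, ← hRdef]
    congr 1
    apply congrArg Multiset.prod
    apply Multiset.map_congr rfl
    intro r hrr
    rw [hsub r, det_cycMat n hn]
  -- N is nonzero
  have hN0 : (N : ℂ) ≠ 0 := by
    rw [hNC]
    apply mul_ne_zero (pow_ne_zero _ (by exact_mod_cast hflead.ne'))
    apply Multiset.prod_ne_zero
    intro hmem
    obtain ⟨r, hr, heq⟩ := Multiset.mem_map.mp hmem
    exact hne r hr (by
      have hpne : ((-1:ℂ))^n ≠ 0 := pow_ne_zero _ (by norm_num)
      exact (mul_eq_zero.mp heq).resolve_left hpne)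
  have hNint : N ≠ 0 := fun h => hN0 (by rw [h]; norm_num)
  have h1N : (1:ℝ) ≤ ‖(N : ℂ)‖ := by
    rw [Complex.norm_intCast]
    exact_mod_cast Int.one_le_abs hNint
  -- absolute values
  have habs : ‖(N : ℂ)‖ = (f.leadingCoeff : ℝ) ^ n *
      (Rts.map fun r => ‖r ^ n - (m:ℂ)‖).prod := by
    rw [hNC, norm_mul, norm_pow, show ∀ s : Multiset ℂ, ‖s.prod‖ = (s.map (‖·‖)).prod from
      fun s => map_multiset_prod (normHom (α := ℂ)) s, Multiset.map_map]
    congr 1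
    · rw [Complex.norm_intCast, abs_of_pos (by exact_mod_cast hflead)]
    · apply congrArg Multiset.prod
      apply Multiset.map_congr rfl
      intro r _
      simp [Function.comp, norm_mul, norm_pow]
  -- peel off the root α
  set R' : Multiset ℂ := Rts.erase (α : ℂ) with hR'def
  have hcons : Rts = (α : ℂ) ::ₘ R' := (Multiset.cons_erase hαmem).symm
  have hcardR' : R'.card = d - 1 := by
    rw [hR'def, Multiset.card_erase_of_mem hαmem, hcard]; rfl
  set ε : ℝ := distToNearestInt (α ^ n) with hεdef
  have hεabs : ‖(α:ℂ) ^ n - (m:ℂ)‖ = ε := by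
    have : ((α:ℂ) ^ n - (m:ℂ)) = ((α ^ n - (m:ℝ) : ℝ) : ℂ) := by push_cast; ring
    rw [this, Complex.norm_real, Real.norm_eq_abs, hεdef, distToNearestInt, hmdef]
  have hεnonneg : 0 ≤ ε := abs_nonneg _
  -- bound each remaining factor
  have hbound : ∀ r ∈ R', ‖r ^ n - (m:ℂ)‖ ≤ 3 * max (‖r‖) α ^ n := by
    intro r _
    have hm2 : |(m:ℝ)| ≤ α ^ n + 1/2 := by
      have h6 : |α ^ n - (m:ℝ)| ≤ 1/2 := abs_sub_round _
      have h7 : |(m:ℝ)| ≤ |α ^ n| + |α ^ n - (m:ℝ)| := by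
        calc |(m:ℝ)| = |α ^ n - (α ^ n - (m:ℝ))| := by ring_nf
          _ ≤ |α ^ n| + |α ^ n - (m:ℝ)| := abs_sub _ _
      rw [abs_of_pos (pow_pos hαpos n)] at h7
      linarith
    set M := max (‖r‖) α with hM
    have hM1 : 1 ≤ M := le_trans hα1.le (le_max_right _ _)
    have hMα : α ^ n ≤ M ^ n := pow_le_pow_left₀ hαpos.le (le_max_right _ _) n
    have hMr : ‖r‖ ^ n ≤ M ^ n := pow_le_pow_left₀ (norm_nonneg r)
      (le_max_left _ _) n
    have hM1n : (1:ℝ) ≤ M ^ n := by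
      calc (1:ℝ) = 1 ^ n := (one_pow n).symm
        _ ≤ M ^ n := pow_le_pow_left₀ (by norm_num) hM1 n
    have hM12 : (1:ℝ)/2 ≤ M ^ n := by linarith
    calc ‖r ^ n - (m:ℂ)‖ ≤ ‖r ^ n‖ + ‖(m:ℂ)‖ :=
        (norm_sub_le _ _)
      _ = ‖r‖ ^ n + |(m:ℝ)| := by rw [norm_pow, Complex.norm_intCast]
      _ ≤ M ^ n + (α ^ n + 1/2) := add_le_add hMr hm2
      _ ≤ M ^ n + (M ^ n + M ^ n) := by linarith
      _ = 3 * M ^ n := by ring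
  -- split the product at α
  have hsplit : (Rts.map fun r => ‖r ^ n - (m:ℂ)‖).prod
      = ε * (R'.map fun r => ‖r ^ n - (m:ℂ)‖).prod := by
    rw [hcons, Multiset.map_cons, Multiset.prod_cons, hεabs]
  set P : ℝ := (R'.map fun r => max (‖r‖) α).prod with hPdef
  have hPpos : 0 < P :=
    multiset_prod_map_pos (fun x _ => lt_of_lt_of_le hαpos (le_max_right _ _))
  have hprodle : (R'.map fun r => ‖r ^ n - (m:ℂ)‖).prod
      ≤ 3 ^ (d-1) * P ^ n := by
    have h9 := multiset_prod_map_le (s := R')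
      (g := fun r => ‖r ^ n - (m:ℂ)‖)
      (h := fun r => 3 * max (‖r‖) α ^ n)
      (fun x _ => norm_nonneg _) hbound
    calc (R'.map fun r => ‖r ^ n - (m:ℂ)‖).prod
        ≤ (R'.map fun r => 3 * max (‖r‖) α ^ n).prod := h9
      _ = (R'.map fun _ => (3:ℝ)).prod * (R'.map fun r => max (‖r‖) α ^ n).prod :=
          Multiset.prod_map_mul
      _ = 3 ^ (d-1) * P ^ n := by
          rw [Multiset.map_const', Multiset.prod_replicate, hcardR', Multiset.prod_map_pow]
  have hlcpos : (0:ℝ) < (f.leadingCoeff : ℝ) := by exact_mod_cast hflead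
  -- the identity lc * P = Calpha
  have hCP : (f.leadingCoeff : ℝ) * P = Calpha α f := by
    unfold Calpha
    rw [← hgdef, ← hRdef, hfdeg]
    have hfilter : Rts.filter (fun z => α < ‖z‖)
        = R'.filter (fun z => α < ‖z‖) := by
      rw [hcons, Multiset.filter_cons_of_neg]
      simp [Complex.norm_real, abs_of_pos hαpos]
    rw [hfilter]
    set S := R'.filter (fun z => α < ‖z‖) with hSdef
    set T := R'.filter (fun z => ¬ α < ‖z‖) with hTdef
    have hR'split : R' = S + T := (Multiset.filter_add_not _ _).symm
    have hcardST : S.card + T.card = d - 1 := by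
      rw [← Multiset.card_add, ← hR'split, hcardR']
    have hPeq : P = (S.map fun r => ‖r‖).prod * α ^ T.card := by
      rw [hPdef]
      conv_lhs => rw [hR'split]
      rw [Multiset.map_add, Multiset.prod_add]
      congr 1
      · apply congrArg Multiset.prod
        apply Multiset.map_congr rfl
        intro x hx
        exact max_eq_left (le_of_lt (Multiset.mem_filter.mp hx).2)
      · have : (T.map fun r => max (‖r‖) α) = T.map fun _ => α := by
          apply Multiset.map_congr rfl
          intro x hx
          exact max_eq_right (le_of_not_gt (Multiset.mem_filter.mp hx).2)
        rw [this, Multiset.map_const', Multiset.prod_replicate]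
    have hdiv : (S.map fun z => ‖z‖ / α).prod
        = (S.map fun r => ‖r‖).prod / α ^ S.card := by
      rw [Multiset.prod_map_div, Multiset.map_const', Multiset.prod_replicate]
    have hpow : α ^ (d-1) = α ^ T.card * α ^ S.card := by
      rw [← pow_add]; congr 1; omega
    rw [hPeq, hdiv, hpow]
    have hαn0 : α ^ S.card ≠ 0 := pow_ne_zero _ hαpos.ne'
    field_simp
  have hCpos : 0 < Calpha α f := by rw [← hCP]; exact mul_pos hlcpos hPpos
  -- main inequality
  have hmain : (1:ℝ) ≤ ε * (3 ^ (d-1) * (Calpha α f) ^ n) := by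
    have t1 : ‖(N:ℂ)‖ ≤ (f.leadingCoeff:ℝ)^n * (ε * (3^(d-1) * P^n)) := by
      rw [habs, hsplit]
      exact mul_le_mul_of_nonneg_left
        (mul_le_mul_of_nonneg_left hprodle hεnonneg) (pow_nonneg hlcpos.le n)
    have t2 : (f.leadingCoeff:ℝ)^n * (ε * (3^(d-1) * P^n))
        = ε * (3^(d-1) * ((f.leadingCoeff:ℝ) * P)^n) := by
      rw [mul_pow]; ring
    rw [t2, hCP] at t1
    exact le_trans h1N t1
  -- convert to the stated form
  have hd1 : ((d:ℤ) - 1) = ((d - 1 : ℕ) : ℤ) := by omega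
  have hfinal : (3:ℝ) ^ (-((d:ℤ)-1)) * (Calpha α f) ^ (-(n:ℤ))
      = (3 ^ (d-1) * (Calpha α f) ^ n)⁻¹ := by
    rw [hd1, _root_.zpow_neg, _root_.zpow_neg, zpow_natCast, zpow_natCast, mul_inv]
  rw [ge_iff_le, hfinal]
  have hpos3C : (0:ℝ) < 3 ^ (d-1) * (Calpha α f) ^ n :=
    mul_pos (pow_pos (by norm_num) _) (pow_pos hCpos _)
  rw [inv_eq_one_div, div_le_iff₀ hpos3C]
  exact hmain
end

section
/- Let a ≥ 1 be an integer and b ∈ {−1, 1} with a² − 4b > 0, and set α = (a + √(a² − 4b))/2. If α > 1, then for every positive integer n with α^n ≥ 2 one has ‖α^n‖ = α^(−n). -/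
/-- If `a ≥ 1` is an integer, `b = ±1` with `a² - 4b > 0`, and
`α = (a + √(a² - 4b))/2 > 1` (a root of `X² - aX + b`), then `‖α^n‖ = α^(-n)`
for every positive integer `n` with `α^n ≥ 2`. -/
theorem quadratic_pisot_unit_fractional_parts (a : ℤ) (ha : 1 ≤ a)
    (b : ℤ) (hb : b = 1 ∨ b = -1) (hdisc : 0 < a ^ 2 - 4 * b)
    (α : ℝ) (hα : α = ((a : ℝ) + Real.sqrt ((a : ℝ) ^ 2 - 4 * (b : ℝ))) / 2)
    (hα1 : 1 < α) :
    ∀ n : ℕ, 0 < n → 2 ≤ α ^ n → distToNearestInt (α ^ n) = α ^ (-(n : ℤ)) := by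
  intro n hn h2
  have hDpos : (0:ℝ) < (a:ℝ)^2 - 4*(b:ℝ) := by exact_mod_cast hdisc
  set D : ℝ := (a:ℝ)^2 - 4*(b:ℝ) with hDdef
  have hs : Real.sqrt D ^ 2 = D := Real.sq_sqrt hDpos.le
  set β : ℝ := ((a:ℝ) - Real.sqrt D)/2 with hβdef
  have hαβ : α * β = (b:ℝ) := by
    rw [hα, hβdef]; nlinarith [hs]
  have hsum : α + β = (a:ℝ) := by rw [hα, hβdef]; ring
  have hα0 : 0 < α := lt_trans one_pos hα1
  have hb1 : |(b:ℝ)| = 1 := by rcases hb with h | h <;> simp [h]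
  have hβabs : |β| = α⁻¹ := by
    have h1 : |α| * |β| = 1 := by rw [← abs_mul, hαβ, hb1]
    rw [abs_of_pos hα0] at h1
    field_simp at h1 ⊢
    linarith
  have hα2 : α^2 = (a:ℝ)*α - (b:ℝ) := by nlinarith [hαβ, hsum]
  have hβ2 : β^2 = (a:ℝ)*β - (b:ℝ) := by nlinarith [hαβ, hsum]
  have key : ∀ k : ℕ, ∃ m : ℤ, (m:ℝ) = α^k + β^k := by
    intro k
    induction k using Nat.twoStepInduction with
    | zero => exact ⟨2, by norm_num⟩
    | one => exact ⟨a, by simpa using hsum.symm⟩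
    | more k ih1 ih2 =>
      obtain ⟨m1, h1⟩ := ih1
      obtain ⟨m2, h2⟩ := ih2
      refine ⟨a * m2 - b * m1, ?_⟩
      push_cast
      have e1 : α^(k+2) = (a:ℝ)*α^(k+1) - (b:ℝ)*α^k := by
        have : α^(k+2) = α^k * α^2 := by ring
        rw [this, hα2]; ring
      have e2 : β^(k+2) = (a:ℝ)*β^(k+1) - (b:ℝ)*β^k := by
        have : β^(k+2) = β^k * β^2 := by ring
        rw [this, hβ2]; ring
      rw [e1, e2, h1, h2]; ring
  obtain ⟨m, hm⟩ := key n
  have hβn : |β^n| = α ^ (-(n:ℤ)) := by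
    rw [abs_pow, hβabs, zpow_neg, zpow_natCast, inv_pow]
  have hαn : (0:ℝ) < α^n := pow_pos hα0 n
  have hle : |β^n| ≤ 1/2 := by
    rw [hβn, zpow_neg, zpow_natCast]
    rw [inv_le_comm₀ hαn (by norm_num)]
    linarith
  have hne : |β^n| ≠ 1/2 := by
    intro heq
    have h2' : α^n = 2 := by
      rw [hβn, zpow_neg, zpow_natCast] at heq
      field_simp at heq
      linarith
    have hβnm : β^n = (m:ℝ) - 2 := by
      have := hm; rw [h2'] at this; linarith
    rw [hβnm] at heq
    have : |((m - 2 : ℤ) : ℝ)| = 1/2 := by push_cast; simpa using heq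
    rcases eq_or_ne (m - 2) 0 with h | h
    · rw [h] at this; norm_num at this
    · have h1 : (1:ℤ) ≤ |m - 2| := Int.one_le_abs h
      have : (1:ℝ) ≤ |((m - 2 : ℤ) : ℝ)| := by
        rw [← Int.cast_abs]; exact_mod_cast h1
      linarith
  have hlt : |β^n| < 1/2 := lt_of_le_of_ne hle hne
  have habs := abs_lt.mp hlt
  have hround : round (α^n) = m := by
    rw [round_eq]
    have : α^n + 1/2 = (1/2 - β^n) + (m:ℝ) := by linarith
    rw [this, Int.floor_add_intCast]
    have : ⌊(1/2 - β^n : ℝ)⌋ = 0 := by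
      apply Int.floor_eq_zero_iff.mpr
      constructor <;> simp <;> linarith [habs.1, habs.2]
    rw [this]; ring
  rw [distToNearestInt, hround, ← hβn]
  have : α^n - (m:ℝ) = -β^n := by linarith
  rw [this, abs_neg]
end

section
/- Let f(X) be an irreducible polynomial of degree d with integer coefficients, let m denote the number of roots of f(X) in ℂ of maximal modulus, and assume that one of these roots of maximal modulus is real and positive. Then m divides d and there is an irreducible polynomial g(X) with integer coefficients such that f(X) = g(X^m). -/
open Polynomial Module


/-- Boyd's lemma: let `f` be an irreducible polynomial with integer coefficients
(irreducible over `ℚ`), let `m` be the number of roots of `f` in `ℂ` of maximal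
modulus (counted with multiplicity), and assume one of these roots is real and
positive. Then `m` divides the degree of `f` and there is an irreducible polynomial
`g` with integer coefficients such that `f(X) = g(X^m)`. -/
theorem boyd_roots_of_maximal_modulus (f : Polynomial ℤ)
    (hf : Irreducible (f.map (Int.castRingHom ℚ)))
    (β : ℂ) (hβroot : β ∈ (f.map (Int.castRingHom ℂ)).roots)
    (hβreal : β.im = 0) (hβpos : 0 < β.re)
    (hβmax : ∀ γ ∈ (f.map (Int.castRingHom ℂ)).roots, ‖γ‖ ≤ ‖β‖)
    (m : ℕ)
    (hm : m = Multiset.card ((f.map (Int.castRingHom ℂ)).roots.filter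
      (fun z => ‖z‖ = ‖β‖))) :
    m ∣ f.natDegree ∧ ∃ g : Polynomial ℤ,
      Irreducible (g.map (Int.castRingHom ℚ)) ∧ f = g.comp (Polynomial.X ^ m) := by
  classical
  set q : ℚ[X] := f.map (Int.castRingHom ℚ) with hqdef
  have hq0 : q ≠ 0 := hf.ne_zero
  set L := q.SplittingField with hLdef
  have hsplitsC : (q.map (algebraMap ℚ ℂ)).Splits := IsAlgClosed.splits _
  set ι : L →ₐ[ℚ] ℂ := Polynomial.SplittingField.lift q hsplitsC with hιdef
  have ιinj : Function.Injective ι := ι.toRingHom.injective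
  set qL : L[X] := q.map (algebraMap ℚ L) with hqLdef
  have hqL0 : qL ≠ 0 := Polynomial.map_ne_zero hq0
  have hsplitL : qL.Splits :=
    (Polynomial.SplittingField.splits q)
  have hmapℂ : f.map (Int.castRingHom ℂ) = qL.map (ι : L →+* ℂ) := by
    show f.map (Int.castRingHom ℂ)
        = ((f.map (Int.castRingHom ℚ)).map (algebraMap ℚ L)).map (ι : L →+* ℂ)
    rw [Polynomial.map_map, Polynomial.map_map]
    exact congrArg (fun φ : ℤ →+* ℂ => f.map φ) (Subsingleton.elim _ _)
  have hrootsℂ : (f.map (Int.castRingHom ℂ)).roots = qL.roots.map (ι : L →+* ℂ) := by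
    rw [hmapℂ]; exact hsplitL.roots_map_of_injective ι.toRingHom.injective
  have hsep : qL.Separable := hf.separable.map
  have hnodup : qL.roots.Nodup := Polynomial.nodup_roots hsep
  set d := f.natDegree with hd
  have hdq : q.natDegree = d :=
    Polynomial.natDegree_map_eq_of_injective (fun a b h => by simpa using h) f
  have hcardroots : Multiset.card qL.roots = d := by
    rw [← hdq, ← Polynomial.natDegree_map (algebraMap ℚ L)]
    exact (Polynomial.SplittingField.splits q).natDegree_eq_card_roots.symm
  obtain ⟨a, haroot, hιa⟩ : ∃ a ∈ qL.roots, ι a = β := by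
    rw [hrootsℂ] at hβroot
    obtain ⟨a, ha, h⟩ := Multiset.mem_map.mp hβroot
    exact ⟨a, ha, h⟩

  -- basic facts about β
  have hβeq : β = (β.re : ℂ) := by
    apply Complex.ext <;> simp [hβreal]
  have habsβ : ‖β‖ = β.re := by
    conv_lhs => rw [hβeq]
    rw [Complex.norm_real, Real.norm_eq_abs]
    exact abs_of_pos hβpos
  have hβne : β ≠ 0 := fun h => by simp [h] at hβpos
  have habspos : 0 < ‖β‖ := by rw [habsβ]; exact hβpos
  have hane : a ≠ 0 := fun h => hβne (by rw [← hιa, h, map_zero])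
  have hβsq : ∀ z : ℂ, ‖z‖ = ‖β‖ → z * (starRingEnd ℂ) z = β ^ 2 := by
    intro z hz
    rw [Complex.mul_conj, Complex.normSq_eq_norm_sq, hz, habsβ]
    conv_rhs => rw [hβeq]
    push_cast
    ring
  -- max modulus over L
  have hmax' : ∀ x ∈ qL.roots, ‖ι x‖ ≤ ‖β‖ := by
    intro x hx
    exact hβmax (ι x) (by rw [hrootsℂ]; exact Multiset.mem_map_of_mem _ hx)
  -- roots are closed under complex conjugation
  have hconjroot : ∀ z ∈ (f.map (Int.castRingHom ℂ)).roots,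
      (starRingEnd ℂ) z ∈ (f.map (Int.castRingHom ℂ)).roots := by
    intro z hz
    rw [Polynomial.mem_roots'] at hz ⊢
    refine ⟨hz.1, ?_⟩
    have h2 := hz.2
    have hmapconj : (f.map (Int.castRingHom ℂ)).map (starRingEnd ℂ : ℂ →+* ℂ)
        = f.map (Int.castRingHom ℂ) := by
      rw [Polynomial.map_map]
      exact congrArg (fun φ : ℤ →+* ℂ => f.map φ) (Subsingleton.elim _ _)
    have : (f.map (Int.castRingHom ℂ)).IsRoot ((starRingEnd ℂ) z) := by
      unfold Polynomial.IsRoot at h2 ⊢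
      calc (f.map (Int.castRingHom ℂ)).eval ((starRingEnd ℂ) z)
          = ((f.map (Int.castRingHom ℂ)).map (starRingEnd ℂ : ℂ →+* ℂ)).eval
              ((starRingEnd ℂ) z) := by rw [hmapconj]
        _ = (starRingEnd ℂ) ((f.map (Int.castRingHom ℂ)).eval z) := by
              rw [Polynomial.eval_map, Polynomial.eval₂_at_apply]
        _ = 0 := by rw [h2, map_zero]
    exact this
  -- the set S of roots of maximal modulus in L
  set S : Finset L :=
    (qL.roots.filter (fun x => ‖ι x‖ = ‖β‖)).toFinset with hSdef
  have hmemS : ∀ x : L, x ∈ S ↔ x ∈ qL.roots ∧ ‖ι x‖ = ‖β‖ := by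
    intro x
    rw [hSdef, Multiset.mem_toFinset, Multiset.mem_filter]
  have hcardS : S.card = m := by
    rw [hSdef, Multiset.toFinset_card_of_nodup (hnodup.filter _), hm, hrootsℂ,
      Multiset.filter_map, Multiset.card_map]
    rfl
  have haS : a ∈ S := (hmemS a).mpr ⟨haroot, by rw [hιa]⟩
  have hm0 : 0 < m := by
    rw [← hcardS]
    exact Finset.card_pos.mpr ⟨a, haS⟩
  -- partner root: for x ∈ S, a^2 * x⁻¹ ∈ S and x * (a^2 * x⁻¹) = a^2
  have hSne : ∀ x ∈ S, x ≠ 0 := by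
    intro x hx h0
    rw [hmemS] at hx
    rw [h0, map_zero, norm_zero] at hx
    exact habspos.ne (hx.2)
  have hpartner : ∀ x ∈ S, a ^ 2 * x⁻¹ ∈ S ∧ x * (a ^ 2 * x⁻¹) = a ^ 2 := by
    intro x hx
    have hx' := (hmemS x).mp hx
    have hxne := hSne x hx
    -- conj (ι x) is a root in ℂ, hence comes from a root y in L
    have hconj : (starRingEnd ℂ) (ι x) ∈ (f.map (Int.castRingHom ℂ)).roots :=
      hconjroot (ι x) (by rw [hrootsℂ]; exact Multiset.mem_map_of_mem _ hx'.1)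
    rw [hrootsℂ] at hconj
    obtain ⟨y, hy, hιy0⟩ := Multiset.mem_map.mp hconj
    have hιy : ι y = (starRingEnd ℂ) (ι x) := hιy0
    have hxy : x * y = a ^ 2 := by
      apply ιinj
      rw [map_mul, map_pow, hιa, hιy]
      exact hβsq (ι x) hx'.2
    have hyval : y = a ^ 2 * x⁻¹ := by
      rw [eq_mul_inv_iff_mul_eq₀ hxne]
      linear_combination hxy
    have hyS : y ∈ S := by
      rw [hmemS]
      refine ⟨hy, ?_⟩
      rw [hιy, Complex.norm_conj, hx'.2]
    rw [← hyval]
    exact ⟨hyS, hxy⟩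
  -- roots are preserved by automorphisms
  have hrootσ : ∀ (σ : L ≃ₐ[ℚ] L), ∀ x ∈ qL.roots, σ x ∈ qL.roots := by
    intro σ x hx
    rw [Polynomial.mem_roots hqL0] at hx ⊢
    have hx2 : Polynomial.aeval x q = 0 := by
      rw [Polynomial.aeval_def, ← Polynomial.eval_map]; exact hx
    have h3 := Polynomial.aeval_algHom_apply σ.toAlgHom x q
    rw [hx2, map_zero] at h3
    rw [Polynomial.IsRoot, Polynomial.eval_map, ← Polynomial.aeval_def]
    exact h3
  -- key step: automorphisms sending a into S preserve S
  have hkey : ∀ σ : L ≃ₐ[ℚ] L, ‖ι (σ a)‖ = ‖β‖ →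
      ∀ x ∈ S, σ x ∈ S := by
    intro σ hσ x hx
    obtain ⟨hyS, hxy⟩ := hpartner x hx
    have hx' := (hmemS x).mp hx
    have hy' := (hmemS _).mp hyS
    have hrel : σ x * σ (a ^ 2 * x⁻¹) = σ a ^ 2 := by
      rw [← map_mul, hxy, map_pow]
    have habs : ‖ι (σ x)‖ * ‖ι (σ (a ^ 2 * x⁻¹))‖
        = ‖β‖ ^ 2 := by
      rw [← norm_mul, ← map_mul, hrel, map_pow, norm_pow, hσ]
    have h1 : ‖ι (σ x)‖ ≤ ‖β‖ :=
      hmax' _ (hrootσ σ x hx'.1)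
    have h2 : ‖ι (σ (a ^ 2 * x⁻¹))‖ ≤ ‖β‖ :=
      hmax' _ (hrootσ σ _ hy'.1)
    have h3 : 0 ≤ ‖ι (σ x)‖ := norm_nonneg _
    have h4 : 0 ≤ ‖ι (σ (a ^ 2 * x⁻¹))‖ := norm_nonneg _
    rw [hmemS]
    refine ⟨hrootσ σ x hx'.1, ?_⟩
    nlinarith [habspos]

  -- the subgroup H of automorphisms sending a to a root of maximal modulus
  set H : Subgroup (L ≃ₐ[ℚ] L) :=
    { carrier := {σ | ‖ι (σ a)‖ = ‖β‖}
      one_mem' := by simp [hιa]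
      mul_mem' := by
        intro σ τ hσ hτ
        have hτa : τ a ∈ S := (hmemS _).mpr ⟨hrootσ τ a haroot, hτ⟩
        have := hkey σ hσ (τ a) hτa
        exact ((hmemS _).mp this).2
      inv_mem' := by
        intro σ hσ
        obtain ⟨x, hxS, hσx⟩ := Finset.surj_on_of_inj_on_of_card_le
          (fun x _ => σ x) (fun x hx => hkey σ hσ x hx)
          (fun x y _ _ h => σ.injective h) le_rfl a haS
        have hσx' : σ x = a := hσx.symm
        show ‖ι (σ⁻¹ a)‖ = ‖β‖
        have h5 : σ⁻¹ a = x := by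
          rw [← hσx']
          show σ.symm (σ x) = x
          exact σ.symm_apply_apply x
        rw [h5]
        exact ((hmemS x).mp hxS).2 } with hHdef
  have hmemH : ∀ σ : L ≃ₐ[ℚ] L, σ ∈ H ↔ ‖ι (σ a)‖ = ‖β‖ := by
    intro σ; rfl
  have hHS : ∀ σ ∈ H, ∀ x ∈ S, σ x ∈ S := by
    intro σ hσ
    exact hkey σ ((hmemH σ).mp hσ)
  -- automorphisms in H fix a^m
  have hfixb : ∀ σ ∈ H, σ (a ^ m) = a ^ m := by
    have hP : ∀ σ ∈ H, σ (∏ x ∈ S, x) = ∏ x ∈ S, x := by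
      intro σ hσ
      have himage : Finset.image (fun x => σ x) S = S := by
        apply Finset.eq_of_subset_of_card_le
        · intro y hy
          obtain ⟨x, hx, rfl⟩ := Finset.mem_image.mp hy
          exact hHS σ hσ x hx
        · rw [Finset.card_image_of_injective _ σ.injective]
      rw [map_prod]
      conv_rhs => rw [← himage]
      rw [Finset.prod_image (fun x _ y _ h => σ.injective h)]
    have hPsq : (∏ x ∈ S, x) * (∏ x ∈ S, x) = (a ^ m) * (a ^ m) := by
      have hinvol : ∀ x : L, x ≠ 0 → a ^ 2 * (a ^ 2 * x⁻¹)⁻¹ = x := by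
        intro x hx
        rw [mul_inv, inv_inv, ← mul_assoc, mul_inv_cancel₀ (pow_ne_zero 2 hane), one_mul]
      have h1 : (∏ x ∈ S, x) = ∏ x ∈ S, a ^ 2 * x⁻¹ := by
        refine Finset.prod_nbij' (fun x => a ^ 2 * x⁻¹) (fun x => a ^ 2 * x⁻¹)
          ?_ ?_ ?_ ?_ ?_
        · intro x hx; exact (hpartner x hx).1
        · intro x hx; exact (hpartner x hx).1
        · intro x hx; exact hinvol x (hSne x hx)
        · intro x hx; exact hinvol x (hSne x hx)
        · intro x hx; exact (hinvol x (hSne x hx)).symm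
      calc (∏ x ∈ S, x) * (∏ x ∈ S, x)
          = ∏ x ∈ S, (x * (a ^ 2 * x⁻¹)) := by
            nth_rewrite 2 [h1]
            rw [← Finset.prod_mul_distrib]
        _ = ∏ _x ∈ S, a ^ 2 := Finset.prod_congr rfl (fun x hx => (hpartner x hx).2)
        _ = (a ^ 2) ^ S.card := Finset.prod_const _
        _ = (a ^ m) * (a ^ m) := by rw [hcardS, ← pow_mul, ← pow_add, two_mul]
    have hPcases : (∏ x ∈ S, x) = a ^ m ∨ (∏ x ∈ S, x) = -(a ^ m) := by
      rcases mul_self_eq_mul_self_iff.mp hPsq with h | h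
      · exact Or.inl h
      · exact Or.inr h
    intro σ hσ
    rcases hPcases with h | h
    · rw [← h, hP σ hσ, h]
    · have : σ (∏ x ∈ S, x) = ∏ x ∈ S, x := hP σ hσ
      rw [h, map_neg, neg_inj] at this
      exact this

  -- transitivity of the Galois action on roots
  have haev : ∀ x ∈ qL.roots, Polynomial.aeval x q = 0 := by
    intro x hx
    rw [Polynomial.mem_roots hqL0] at hx
    rw [Polynomial.aeval_def, ← Polynomial.eval_map]
    exact hx
  haveI : Normal ℚ L := Polynomial.SplittingField.instNormal q
  have htrans : ∀ x ∈ qL.roots, ∃ σ : L ≃ₐ[ℚ] L, σ a = x := by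
    intro x hx
    have h1 : minpoly ℚ x = minpoly ℚ a := by
      rw [← minpoly.eq_of_irreducible hf (haev x hx),
        ← minpoly.eq_of_irreducible hf (haev a haroot)]
    obtain ⟨σ, hσ⟩ := (Normal.minpoly_eq_iff_mem_orbit (F := ℚ) (E := L)).mp h1
    exact ⟨σ, hσ⟩
  set R : Finset L := qL.roots.toFinset with hRdef
  have hcardR : R.card = d := by
    rw [hRdef, Multiset.toFinset_card_of_nodup hnodup, hcardroots]
  have horbitG : MulAction.orbit (L ≃ₐ[ℚ] L) a = (R : Set L) := by
    ext x
    constructor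
    · rintro ⟨σ, rfl⟩
      exact Multiset.mem_toFinset.mpr (hrootσ σ a haroot)
    · intro hx
      obtain ⟨σ, hσ⟩ := htrans x (Multiset.mem_toFinset.mp hx)
      exact ⟨σ, hσ⟩
  have hstab_index : (MulAction.stabilizer (L ≃ₐ[ℚ] L) a).index = d := by
    rw [MulAction.index_stabilizer, horbitG, Set.ncard_coe_finset, hcardR]
  have hstabH : MulAction.stabilizer (L ≃ₐ[ℚ] L) a ≤ H := by
    intro σ hσ
    have h1 : σ a = a := hσ
    rw [hmemH, h1, hιa]
  have horbitH : MulAction.orbit H a = (S : Set L) := by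
    ext x
    constructor
    · rintro ⟨σ, rfl⟩
      exact hHS σ.1 σ.2 a haS
    · intro hx
      have hx' := (hmemS x).mp hx
      obtain ⟨σ, hσ⟩ := htrans x hx'.1
      have hσH : σ ∈ H := by rw [hmemH, hσ]; exact hx'.2
      exact ⟨⟨σ, hσH⟩, hσ⟩
  have hstabH_index : (MulAction.stabilizer H a).index = m := by
    rw [MulAction.index_stabilizer, horbitH, Set.ncard_coe_finset, hcardS]
  have hsubof : (MulAction.stabilizer (L ≃ₐ[ℚ] L) a).subgroupOf H
      = MulAction.stabilizer H a := by
    ext σ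
    rw [Subgroup.mem_subgroupOf, MulAction.mem_stabilizer_iff, MulAction.mem_stabilizer_iff]
    rfl
  have hdm : m * H.index = d := by
    rw [← hstab_index, ← Subgroup.relIndex_mul_index hstabH, Subgroup.relIndex, hsubof,
      hstabH_index]

  -- Galois correspondence: the fixed field of H
  haveI : IsGalois ℚ L := ⟨⟩
  set K : IntermediateField ℚ L := IntermediateField.fixedField H with hKdef
  have hbK : a ^ m ∈ K := by
    intro σ
    exact hfixb σ.1 σ.2
  have hKrank : finrank ℚ K = H.index := by
    have h1 : finrank ℚ K * finrank K L = finrank ℚ L := finrank_mul_finrank ℚ K L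
    have h2 : finrank K L = Fintype.card H := by
      rw [← Nat.card_eq_fintype_card]; exact IntermediateField.finrank_fixedField_eq_card H
    have h3 : Fintype.card (L ≃ₐ[ℚ] L) = finrank ℚ L := by
      rw [← Nat.card_eq_fintype_card]; exact IsGalois.card_aut_eq_finrank ℚ L
    have h4 : Nat.card (↥H) * H.index = Nat.card (L ≃ₐ[ℚ] L) := Subgroup.card_mul_index H
    have hpos : 0 < Fintype.card (↥H) := Fintype.card_pos
    apply Nat.eq_of_mul_eq_mul_right hpos
    calc finrank ℚ K * Fintype.card (↥H) = finrank ℚ L := by rw [← h2]; exact h1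
      _ = Fintype.card (L ≃ₐ[ℚ] L) := h3.symm
      _ = H.index * Fintype.card (↥H) := by
          rw [← Nat.card_eq_fintype_card, ← Nat.card_eq_fintype_card, ← h4]
          ring
  set b : L := a ^ m with hbdef
  have hbint : IsIntegral ℚ b := IsIntegral.of_finite ℚ b
  have haint : IsIntegral ℚ a := IsIntegral.of_finite ℚ a
  set g₀ : ℚ[X] := minpoly ℚ b with hg0def
  have hg₀irr : Irreducible g₀ := minpoly.irreducible hbint
  have hg₀monic : g₀.Monic := minpoly.monic hbint
  have ht_le : g₀.natDegree ≤ H.index := by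
    have h5 : IntermediateField.adjoin ℚ {b} ≤ K :=
      IntermediateField.adjoin_simple_le_iff.mpr hbK
    have h6 : finrank ℚ (IntermediateField.adjoin ℚ {b}) = g₀.natDegree :=
      IntermediateField.adjoin.finrank hbint
    have h7 : finrank ℚ (IntermediateField.adjoin ℚ {b}) ≤ finrank ℚ K := by
      have hle : (IntermediateField.adjoin ℚ {b}).toSubalgebra.toSubmodule
          ≤ K.toSubalgebra.toSubmodule := fun x hx => h5 hx
      have h8 := Submodule.finrank_mono hle
      rwa [Subalgebra.finrank_toSubmodule, Subalgebra.finrank_toSubmodule] at h8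
    rw [← h6, ← hKrank]
    exact h7
  have haevmin : Polynomial.aeval a (Polynomial.expand ℚ m g₀) = 0 := by
    rw [Polynomial.expand_aeval]
    exact minpoly.aeval ℚ b
  have hdvd1 : minpoly ℚ a ∣ Polynomial.expand ℚ m g₀ := minpoly.dvd ℚ a haevmin
  have hg₀0 : g₀ ≠ 0 := hg₀monic.ne_zero
  have hexp0 : Polynomial.expand ℚ m g₀ ≠ 0 := (Polynomial.expand_ne_zero hm0).mpr hg₀0
  have hminpa : q * Polynomial.C q.leadingCoeff⁻¹ = minpoly ℚ a :=
    minpoly.eq_of_irreducible hf (haev a haroot)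
  have hlc0 : q.leadingCoeff ≠ 0 := Polynomial.leadingCoeff_ne_zero.mpr hq0
  have hdminpa : (minpoly ℚ a).natDegree = d := by
    rw [← hminpa, Polynomial.natDegree_mul_C (inv_ne_zero hlc0), hdq]
  have hdle : d ≤ m * g₀.natDegree := by
    have h8 := Polynomial.natDegree_le_of_dvd hdvd1 hexp0
    rwa [hdminpa, Polynomial.natDegree_expand, mul_comm] at h8
  have htk : g₀.natDegree = H.index := by
    refine le_antisymm ht_le ?_
    have h9 : m * H.index ≤ m * g₀.natDegree := by rw [hdm]; exact hdle
    exact Nat.le_of_mul_le_mul_left h9 hm0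
  have hdeg_eq : (Polynomial.expand ℚ m g₀).natDegree = (minpoly ℚ a).natDegree := by
    rw [Polynomial.natDegree_expand, htk, hdminpa, mul_comm, hdm]
  have hminpa_eq : minpoly ℚ a = Polynomial.expand ℚ m g₀ := by
    apply Polynomial.eq_of_dvd_of_natDegree_le_of_leadingCoeff hdvd1 hdeg_eq.le
    rw [(minpoly.monic haint).leadingCoeff, (hg₀monic.expand hm0).leadingCoeff]
  have hqfact : q = Polynomial.expand ℚ m (g₀ * Polynomial.C q.leadingCoeff) := by
    have h9 : q = minpoly ℚ a * Polynomial.C q.leadingCoeff := by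
      rw [← hminpa]
      rw [mul_assoc, ← Polynomial.C_mul, inv_mul_cancel₀ hlc0, Polynomial.C_1, mul_one]
    conv_lhs => rw [h9, hminpa_eq]
    rw [map_mul, Polynomial.expand_C]

  -- construct the integer polynomial g
  set c : ℚ := q.leadingCoeff with hcdef
  set gq : ℚ[X] := g₀ * Polynomial.C c with hgqdef
  set g : ℤ[X] := ∑ i ∈ Finset.range (d + 1), Polynomial.monomial i (f.coeff (m * i))
    with hgdef
  have hgcoeff : ∀ i : ℕ, g.coeff i = if i < d + 1 then f.coeff (m * i) else 0 := by
    intro i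
    rw [hgdef, Polynomial.finset_sum_coeff]
    simp only [Polynomial.coeff_monomial]
    rw [Finset.sum_ite_eq' (Finset.range (d + 1)) i]
    simp [Finset.mem_range]
  have hqcoeff : ∀ i : ℕ, gq.coeff i = q.coeff (m * i) := by
    intro i
    conv_rhs => rw [hqfact]
    rw [Polynomial.coeff_expand hm0]
    rw [if_pos (dvd_mul_right m i), Nat.mul_div_cancel_left i hm0]
  have hcoeff_zero : ∀ j : ℕ, d < j → q.coeff (m * j) = 0 := by
    intro j hj
    apply Polynomial.coeff_eq_zero_of_natDegree_lt
    rw [hdq]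
    calc d < j := hj
      _ ≤ m * j := Nat.le_mul_of_pos_left j hm0
  have hgmap : g.map (Int.castRingHom ℚ) = gq := by
    ext i
    rw [Polynomial.coeff_map, hgcoeff i, hqcoeff i]
    have hfm : q.coeff (m * i) = (Int.castRingHom ℚ) (f.coeff (m * i)) :=
      Polynomial.coeff_map _ _
    by_cases hi : i < d + 1
    · rw [if_pos hi]
      exact hfm.symm
    · rw [if_neg hi, map_zero]
      exact (hcoeff_zero i (by omega)).symm
  refine ⟨⟨H.index, hdm.symm⟩, g, ?_, ?_⟩
  · rw [hgmap, hgqdef]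
    have hu : IsUnit (Polynomial.C c) := Polynomial.isUnit_C.mpr (isUnit_iff_ne_zero.mpr hlc0)
    exact Associated.irreducible ⟨hu.unit, by rw [IsUnit.unit_spec]⟩ hg₀irr
  · apply Polynomial.map_injective (Int.castRingHom ℚ) (fun x y h => by simpa using h)
    rw [Polynomial.map_comp, hgmap, Polynomial.map_pow, Polynomial.map_X,
      ← Polynomial.expand_eq_comp_X_pow, ← hqfact]
end

section
/- For Lebesgue-almost every real number ξ > 1, one has limsup_{n → ∞} (−log ‖ξ^n‖)/n = 0. -/
open Filter

open MeasureTheory Set ENNReal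

lemma pow_sub_pow_ge (a x y : ℝ) (ha : 0 ≤ a) (hax : a ≤ x) (hxy : x ≤ y) :
    ∀ n : ℕ, a ^ n * (y - x) ≤ y ^ (n+1) - x ^ (n+1) := by
  intro n
  induction n with
  | zero => simp
  | succ n ih =>
    have hx0 : 0 ≤ x := le_trans ha hax
    have hy0 : 0 ≤ y := le_trans hx0 hxy
    have hay : a ≤ y := le_trans hax hxy
    have h1 : a * (a ^ n * (y - x)) ≤ y * (y ^ (n+1) - x ^ (n+1)) :=
      mul_le_mul hay ih (mul_nonneg (by positivity) (by linarith)) hy0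
    have h2 : 0 ≤ x ^ (n+1) * (y - x) := mul_nonneg (by positivity) (by linarith)
    have key : y ^ (n+1+1) - x ^ (n+1+1) = y * (y^(n+1) - x^(n+1)) + x^(n+1)*(y-x) := by ring
    have ha' : a ^ (n+1) * (y - x) = a * (a ^ n * (y - x)) := by ring
    linarith

lemma measure_bad_le (a b : ℝ) (ha : 1 ≤ a) (hab : a ≤ b) (n : ℕ) (hn : 1 ≤ n)
    (δ : ℝ) (hδ0 : 0 < δ) (hδ1 : δ ≤ 1) :
    volume {ξ : ℝ | ξ ∈ Icc a b ∧ distToNearestInt (ξ^n) < δ}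
      ≤ ENNReal.ofReal ((b^n + 2) * (4*δ / a^(n-1))) := by
  have ha0 : (0:ℝ) < a := lt_of_lt_of_le one_pos ha
  have hb0 : (0:ℝ) < b := lt_of_lt_of_le ha0 hab
  have hL0 : (0:ℝ) ≤ 4*δ/a^(n-1) := by positivity
  set T : ℤ → Set ℝ := fun m => {ξ : ℝ | ξ ∈ Icc a b ∧ |ξ^n - m| < δ} with hT
  set M : Finset ℤ := Finset.Icc (⌈a^n⌉ - 1) (⌊b^n⌋ + 1) with hM
  have hsub : {ξ : ℝ | ξ ∈ Icc a b ∧ distToNearestInt (ξ^n) < δ} ⊆ ⋃ m ∈ M, T m := by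
    rintro ξ ⟨hmem, hdist⟩
    have hx1 : a^n ≤ ξ^n := pow_le_pow_left₀ (le_of_lt ha0) hmem.1 n
    have hx2 : ξ^n ≤ b^n := pow_le_pow_left₀ (le_trans (le_of_lt ha0) hmem.1) hmem.2 n
    have habs : |ξ^n - (round (ξ^n) : ℤ)| < δ := hdist
    have h1 : ((round (ξ^n) : ℤ) : ℝ) > a^n - 1 := by
      have := abs_lt.1 habs
      linarith
    have h2 : ((round (ξ^n) : ℤ) : ℝ) < b^n + 1 := by
      have := abs_lt.1 habs
      linarith
    have hmm : round (ξ^n) ∈ M := by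
      rw [hM, Finset.mem_Icc]
      constructor
      · have : ⌈a^n⌉ ≤ round (ξ^n) + 1 := by
          rw [Int.ceil_le]; push_cast; linarith
        omega
      · have : round (ξ^n) ≤ ⌊b^n + 1⌋ := Int.le_floor.2 (by push_cast; linarith)
        simpa [Int.floor_add_one] using this
    exact Set.mem_biUnion hmm ⟨hmem, habs⟩
  have hTm : ∀ m : ℤ, volume (T m) ≤ ENNReal.ofReal (4*δ/a^(n-1)) := by
    intro m
    rcases Set.eq_empty_or_nonempty (T m) with h | ⟨ξ₀, hξ₀⟩
    · simp [h]
    have key : ∀ ξ₁ ξ₂ : ℝ, ξ₁ ∈ T m → ξ₂ ∈ T m → ξ₁ ≤ ξ₂ → ξ₂ - ξ₁ ≤ 2*δ/a^(n-1) := by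
      intro ξ₁ ξ₂ h₁ h₂ hle
      have hp : a^(n-1) * (ξ₂ - ξ₁) ≤ ξ₂^((n-1)+1) - ξ₁^((n-1)+1) :=
        pow_sub_pow_ge a ξ₁ ξ₂ (le_of_lt ha0) h₁.1.1 hle (n-1)
      have hn' : (n-1)+1 = n := by omega
      rw [hn'] at hp
      have d1 := abs_lt.1 h₁.2
      have d2 := abs_lt.1 h₂.2
      have h2δ : ξ₂^n - ξ₁^n < 2*δ := by linarith
      rw [le_div_iff₀ (pow_pos ha0 (n-1))]
      nlinarith [pow_pos ha0 (n-1)]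
    have hsub2 : T m ⊆ Icc (ξ₀ - 2*δ/a^(n-1)) (ξ₀ + 2*δ/a^(n-1)) := by
      intro ξ hξ
      rcases le_total ξ ξ₀ with h | h
      · have := key ξ ξ₀ hξ hξ₀ h
        constructor <;> [linarith; linarith [div_nonneg (by linarith : (0:ℝ) ≤ 2*δ) (le_of_lt (pow_pos ha0 (n-1)))]]
      · have := key ξ₀ ξ hξ₀ hξ h
        constructor <;> [linarith [div_nonneg (by linarith : (0:ℝ) ≤ 2*δ) (le_of_lt (pow_pos ha0 (n-1)))]; linarith]
    calc volume (T m) ≤ volume (Icc (ξ₀ - 2*δ/a^(n-1)) (ξ₀ + 2*δ/a^(n-1))) := measure_mono hsub2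
      _ = ENNReal.ofReal (4*δ/a^(n-1)) := by rw [Real.volume_Icc]; congr 1; ring
  calc volume {ξ : ℝ | ξ ∈ Icc a b ∧ distToNearestInt (ξ^n) < δ}
      ≤ volume (⋃ m ∈ M, T m) := measure_mono hsub
    _ ≤ ∑ m ∈ M, volume (T m) := measure_biUnion_finset_le M T
    _ ≤ ∑ m ∈ M, ENNReal.ofReal (4*δ/a^(n-1)) := Finset.sum_le_sum fun m _ => hTm m
    _ = (M.card : ℝ≥0∞) * ENNReal.ofReal (4*δ/a^(n-1)) := by
        rw [Finset.sum_const, nsmul_eq_mul]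
    _ ≤ ENNReal.ofReal ((b^n + 2) * (4*δ/a^(n-1))) := by
        have hcard : (M.card : ℝ) ≤ b^n + 2 := by
          have h1 : (1:ℝ) ≤ a^n := one_le_pow₀ ha
          have hc : M.card = ((⌊b^n⌋ + 1) + 1 - (⌈a^n⌉ - 1)).toNat := by
            rw [hM, Int.card_Icc]
          have hfl : (⌊b^n⌋ : ℝ) ≤ b^n := Int.floor_le _
          have hcl : a^n ≤ (⌈a^n⌉ : ℝ) := Int.le_ceil _
          rcases le_or_gt ((⌊b^n⌋ + 1) + 1 - (⌈a^n⌉ - 1)) 0 with h | h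
          · rw [hc, Int.toNat_of_nonpos h]; simp only [Nat.cast_zero]; positivity
          · rw [hc]
            have : ((((⌊b^n⌋ + 1) + 1 - (⌈a^n⌉ - 1)).toNat : ℤ) : ℝ) ≤ b^n + 2 := by
              rw [Int.toNat_of_nonneg (le_of_lt h)]
              push_cast
              linarith
            exact_mod_cast this
        calc (M.card : ℝ≥0∞) * ENNReal.ofReal (4*δ/a^(n-1))
            = ENNReal.ofReal ((M.card : ℝ) * (4*δ/a^(n-1))) := by
              rw [ENNReal.ofReal_mul (by positivity)]
              simp
          _ ≤ _ := ENNReal.ofReal_le_ofReal (mul_le_mul_of_nonneg_right hcard hL0)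

lemma measure_limsup_S_eq_zero (ε : ℝ) (hε : 0 < ε) (j : ℕ) :
    volume (limsup (fun n : ℕ =>
      {ξ : ℝ | ξ ∈ Icc (Real.exp (j*(ε/2))) (Real.exp ((j+1)*(ε/2)))
        ∧ distToNearestInt (ξ^n) < Real.exp (-(ε*n))}) atTop) = 0 := by
  set a := Real.exp (j*(ε/2)) with haa
  set b := Real.exp ((j+1)*(ε/2)) with hbb
  set r := Real.exp (-(ε/2)) with hrr
  have ha1 : 1 ≤ a := Real.one_le_exp (by positivity)
  have hab : a ≤ b := Real.exp_le_exp.2 (by nlinarith)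
  have hb1 : (1:ℝ) ≤ b := le_trans ha1 hab
  have hr0 : 0 < r := Real.exp_pos _
  have hr1 : r < 1 := Real.exp_lt_one_iff.2 (by linarith)
  have hbound : ∀ n : ℕ,
      volume {ξ : ℝ | ξ ∈ Icc a b ∧ distToNearestInt (ξ^n) < Real.exp (-(ε*n))}
        ≤ ENNReal.ofReal ((4*(b+2)) * r^n) := by
    intro n
    rcases Nat.eq_zero_or_pos n with h0 | hn
    · subst h0
      refine le_trans (measure_mono (fun ξ (hξ : _ ∧ _) => hξ.1)) ?_
      rw [Real.volume_Icc, pow_zero, mul_one]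
      exact ENNReal.ofReal_le_ofReal (by linarith)
    · have hδ0 : 0 < Real.exp (-(ε*n)) := Real.exp_pos _
      have hδ1 : Real.exp (-(ε*n)) ≤ 1 := Real.exp_le_one_iff.2 (neg_nonpos.2 (by positivity))
      calc volume {ξ : ℝ | ξ ∈ Icc a b ∧ distToNearestInt (ξ^n) < Real.exp (-(ε*n))}
          ≤ ENNReal.ofReal ((b^n + 2) * (4*Real.exp (-(ε*n))/a^(n-1))) :=
            measure_bad_le a b ha1 hab n hn _ hδ0 hδ1
        _ ≤ ENNReal.ofReal ((4*(b+2)) * r^n) := by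
            apply ENNReal.ofReal_le_ofReal
            have hapow : (1:ℝ) ≤ a^(n-1) := one_le_pow₀ ha1
            have hδ : Real.exp (-(ε*n)) = Real.exp (-ε)^n := by
              rw [← Real.exp_nat_mul]; ring_nf
            have hba : b = a * Real.exp (ε/2) := by
              rw [haa, hbb, ← Real.exp_add]; ring_nf
            -- b^n / a^(n-1) = b * (b/a)^(n-1)
            have key1 : b^n / a^(n-1) ≤ b * Real.exp (ε/2)^n := by
              have hbn : b^n = b * b^(n-1) := by
                conv_lhs => rw [show n = 1 + (n-1) by omega]
                rw [pow_add, pow_one]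
              rw [hbn, hba]
              have : (a * Real.exp (ε/2))^(n-1) = a^(n-1) * Real.exp (ε/2)^(n-1) := mul_pow _ _ _
              rw [this]
              rw [div_le_iff₀ (by positivity)]
              have h1 : Real.exp (ε/2)^(n-1) ≤ Real.exp (ε/2)^n :=
                pow_le_pow_right₀ (Real.one_le_exp (by positivity)) (by omega)
              have hb0 : (0:ℝ) < b := by linarith
              calc a * Real.exp (ε/2) * (a^(n-1) * Real.exp (ε/2)^(n-1))
                  ≤ a * Real.exp (ε/2) * (a^(n-1) * Real.exp (ε/2)^n) := by
                    apply mul_le_mul_of_nonneg_left (mul_le_mul_of_nonneg_left h1 (by positivity)) (by positivity)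
                _ = a * Real.exp (ε/2) * Real.exp (ε/2)^n * a^(n-1) := by ring
            have key2 : (2:ℝ) / a^(n-1) ≤ 2 := by
              rw [div_le_iff₀ (by positivity)]; linarith
            have expand : (b^n + 2) * (4*Real.exp (-(ε*n))/a^(n-1))
                = 4*Real.exp (-(ε*n)) * (b^n/a^(n-1)) + 4*Real.exp (-(ε*n)) * (2/a^(n-1)) := by
              ring
            have hmix : Real.exp (-ε) * Real.exp (ε/2) = r := by
              rw [hrr, ← Real.exp_add]; ring_nf
            have t1 : 4*Real.exp (-(ε*n)) * (b^n/a^(n-1)) ≤ 4*b*r^n := by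
              have := mul_le_mul_of_nonneg_left key1 (by positivity : (0:ℝ) ≤ 4*Real.exp (-(ε*n)))
              calc 4*Real.exp (-(ε*n)) * (b^n/a^(n-1)) ≤ 4*Real.exp (-(ε*n)) * (b * Real.exp (ε/2)^n) := this
                _ = 4*b*((Real.exp (-ε) * Real.exp (ε/2))^n) := by
                    rw [hδ, mul_pow]; ring
                _ = 4*b*r^n := by rw [hmix]
            have t2 : 4*Real.exp (-(ε*n)) * (2/a^(n-1)) ≤ 8*r^n := by
              have h8 : Real.exp (-(ε*n)) ≤ r^n := by
                rw [hrr, ← Real.exp_nat_mul]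
                apply Real.exp_le_exp.2
                have hn0 : (0:ℝ) ≤ (n:ℝ) := Nat.cast_nonneg n
                nlinarith
              calc 4*Real.exp (-(ε*n)) * (2/a^(n-1)) ≤ 4*Real.exp (-(ε*n)) * 2 := by
                    apply mul_le_mul_of_nonneg_left key2 (by positivity)
                _ = 8 * Real.exp (-(ε*n)) := by ring
                _ ≤ 8*r^n := by linarith
            calc (b^n + 2) * (4*Real.exp (-(ε*n))/a^(n-1))
                = 4*Real.exp (-(ε*n)) * (b^n/a^(n-1)) + 4*Real.exp (-(ε*n)) * (2/a^(n-1)) := expand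
              _ ≤ 4*b*r^n + 8*r^n := add_le_add t1 t2
              _ = (4*(b+2)) * r^n := by ring
  apply measure_limsup_atTop_eq_zero
  have hsum : Summable (fun n : ℕ => (4*(b+2)) * r^n) :=
    (summable_geometric_of_lt_one (le_of_lt hr0) hr1).mul_left _
  have : ∑' n : ℕ, volume {ξ : ℝ | ξ ∈ Icc a b ∧ distToNearestInt (ξ^n) < Real.exp (-(ε*n))}
      ≤ ∑' n : ℕ, ENNReal.ofReal ((4*(b+2)) * r^n) := ENNReal.tsum_le_tsum hbound
  refine ne_top_of_le_ne_top ?_ this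
  rw [← ENNReal.ofReal_tsum_of_nonneg (fun n => by positivity) hsum]
  exact ENNReal.ofReal_ne_top

lemma measure_integerPower_eq_zero :
    volume {ξ : ℝ | 1 < ξ ∧ ∃ n : ℕ, ∃ m : ℤ, ξ^(n+1) = (m:ℝ)} = 0 := by
  have hsub : {ξ : ℝ | 1 < ξ ∧ ∃ n : ℕ, ∃ m : ℤ, ξ^(n+1) = (m:ℝ)}
      ⊆ ⋃ (n : ℕ) (m : ℤ), {ξ : ℝ | 1 < ξ ∧ ξ^(n+1) = (m:ℝ)} := by
    rintro ξ ⟨hξ, n, m, hm⟩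
    exact Set.mem_iUnion.2 ⟨n, Set.mem_iUnion.2 ⟨m, ⟨hξ, hm⟩⟩⟩
  refine measure_mono_null hsub (measure_iUnion_null fun n => measure_iUnion_null fun m => ?_)
  apply Set.Countable.measure_zero
  apply Set.Subsingleton.countable
  rintro ξ₁ ⟨h1, e1⟩ ξ₂ ⟨h2, e2⟩
  have hmono : StrictMonoOn (fun x : ℝ => x ^ (n+1)) {a : ℝ | 0 ≤ a} :=
    pow_left_strictMonoOn₀ (by omega)
  exact hmono.injOn (by simp; linarith) (by simp; linarith) (by rw [e1, e2])

/-- Mahler–Szekeres: for Lebesgue-almost every real `ξ > 1`,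
`limsup_{n → ∞} (-log ‖ξ^n‖)/n = 0`. -/
theorem ae_limsup_neg_log_dist_eq_zero :
    ∀ᵐ ξ ∂(MeasureTheory.volume : MeasureTheory.Measure ℝ), 1 < ξ →
      Filter.limsup (fun n : ℕ => -Real.log (distToNearestInt (ξ ^ n)) / n) atTop = 0 := by
  set S : ℕ → ℕ → ℕ → Set ℝ := fun k j n =>
    {ξ : ℝ | ξ ∈ Icc (Real.exp (j*((1/((k:ℝ)+1))/2))) (Real.exp ((j+1)*((1/((k:ℝ)+1))/2)))
      ∧ distToNearestInt (ξ^n) < Real.exp (-((1/((k:ℝ)+1))*n))} with hS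
  have hE : ∀ᵐ ξ ∂(volume : Measure ℝ), ¬(1 < ξ ∧ ∃ n : ℕ, ∃ m : ℤ, ξ^(n+1) = (m:ℝ)) := by
    rw [ae_iff]
    simpa using measure_integerPower_eq_zero
  have hL : ∀ᵐ ξ ∂(volume : Measure ℝ), ∀ k j : ℕ, ξ ∉ limsup (S k j) atTop := by
    rw [ae_all_iff]
    intro k
    rw [ae_all_iff]
    intro j
    rw [ae_iff]
    simp only [not_not, Set.setOf_mem_eq]
    exact measure_limsup_S_eq_zero (1/((k:ℝ)+1)) (by positivity) j
  filter_upwards [hE, hL] with ξ hE' hL' hξ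
  have hξ0 : (0:ℝ) < ξ := lt_trans one_pos hξ
  push_neg at hE'
  have hint := hE' hξ
  have hd : ∀ n : ℕ, 1 ≤ n → 0 < distToNearestInt (ξ^n) ∧ distToNearestInt (ξ^n) ≤ 1/2 := by
    intro n hn
    refine ⟨abs_pos.2 (sub_ne_zero.2 fun h => ?_), abs_sub_round _⟩
    exact hint (n-1) (round (ξ^n)) (by rw [show n-1+1 = n by omega]; exact h)
  have hf0 : ∀ n : ℕ, 1 ≤ n → 0 ≤ -Real.log (distToNearestInt (ξ^n)) / n := by
    intro n hn
    obtain ⟨h1, h2⟩ := hd n hn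
    have : Real.log (distToNearestInt (ξ^n)) ≤ 0 := Real.log_nonpos (le_of_lt h1) (by linarith)
    exact div_nonneg (by linarith) (Nat.cast_nonneg n)
  have hub : ∀ k : ℕ, ∀ᶠ n : ℕ in atTop, -Real.log (distToNearestInt (ξ^n)) / n ≤ 1/((k:ℝ)+1) := by
    intro k
    set ε : ℝ := 1/((k:ℝ)+1) with hεdef
    have hε : 0 < ε := by positivity
    have hlog : 0 < Real.log ξ := Real.log_pos hξ
    set t : ℝ := Real.log ξ / (ε/2) with htdef
    have ht : 0 ≤ t := by positivity
    set j : ℕ := ⌊t⌋.toNat with hjdef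
    have hjt : ((j:ℤ):ℝ) = ((⌊t⌋:ℤ):ℝ) := by
      norm_cast
      exact Int.toNat_of_nonneg (Int.floor_nonneg.2 ht)
    have hj1 : (j:ℝ) ≤ t := by
      rw [show ((j:ℕ):ℝ) = ((j:ℤ):ℝ) by norm_cast, hjt]
      exact Int.floor_le t
    have hj2 : t < (j:ℝ) + 1 := by
      rw [show ((j:ℕ):ℝ) = ((j:ℤ):ℝ) by norm_cast, hjt]
      exact Int.lt_floor_add_one t
    have hmem : ξ ∈ Icc (Real.exp (j*(ε/2))) (Real.exp ((j+1)*(ε/2))) := by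
      have e1 : (j:ℝ)*(ε/2) ≤ Real.log ξ := by
        rw [htdef] at hj1
        calc (j:ℝ)*(ε/2) ≤ (Real.log ξ / (ε/2))*(ε/2) := by
              apply mul_le_mul_of_nonneg_right hj1 (by positivity)
          _ = Real.log ξ := by field_simp
      have e2 : Real.log ξ ≤ ((j:ℝ)+1)*(ε/2) := by
        rw [htdef] at hj2
        calc Real.log ξ = (Real.log ξ / (ε/2))*(ε/2) := by field_simp
          _ ≤ ((j:ℝ)+1)*(ε/2) := by
              apply mul_le_mul_of_nonneg_right (le_of_lt hj2) (by positivity)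
      constructor
      · calc Real.exp ((j:ℝ)*(ε/2)) ≤ Real.exp (Real.log ξ) := Real.exp_le_exp.2 e1
          _ = ξ := Real.exp_log hξ0
      · calc ξ = Real.exp (Real.log ξ) := (Real.exp_log hξ0).symm
          _ ≤ Real.exp (((j:ℝ)+1)*(ε/2)) := Real.exp_le_exp.2 e2
    have hnotlim := hL' k j
    rw [mem_limsup_iff_frequently_mem, Filter.not_frequently] at hnotlim
    filter_upwards [hnotlim, eventually_ge_atTop 1] with n hn hn1
    have hnot : ¬(ξ ∈ Icc (Real.exp (j*(ε/2))) (Real.exp ((j+1)*(ε/2)))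
        ∧ distToNearestInt (ξ^n) < Real.exp (-(ε*n))) := hn
    have hge : Real.exp (-(ε*n)) ≤ distToNearestInt (ξ^n) := by
      by_contra hlt
      exact hnot ⟨hmem, by linarith [lt_of_not_ge hlt]⟩
    have hlog2 : -(ε*n) ≤ Real.log (distToNearestInt (ξ^n)) := by
      have := Real.log_le_log (Real.exp_pos _) hge
      rwa [Real.log_exp] at this
    have hn0 : (0:ℝ) < n := by exact_mod_cast hn1
    rw [div_le_iff₀ hn0]
    calc -Real.log (distToNearestInt (ξ^n)) ≤ ε*n := by linarith
      _ = 1/((k:ℝ)+1) * n := by rw [hεdef]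
  have htend : Tendsto (fun n : ℕ => -Real.log (distToNearestInt (ξ^n)) / n) atTop (nhds 0) := by
    rw [tendsto_order]
    constructor
    · intro c hc
      filter_upwards [eventually_ge_atTop 1] with n hn
      exact lt_of_lt_of_le hc (hf0 n hn)
    · intro c hc
      obtain ⟨k, hk⟩ := exists_nat_one_div_lt hc
      filter_upwards [hub k] with n hn
      exact lt_of_le_of_lt hn hk
  exact htend.limsup_eq
end

section
/- The set of real numbers ξ > 1 such that limsup_{n → ∞} (−log ‖ξ^n‖)/n = +∞ has Hausdorff dimension zero. -/
open Filter

open ENNReal NNReal MeasureTheory Set Topology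

private lemma aux_pow_sub {x y : ℝ} (hx : 1 ≤ x) (hxy : x ≤ y) {k : ℕ} (hk : 1 ≤ k) :
    y - x ≤ y ^ k - x ^ k := by
  have hx0 : (0:ℝ) ≤ x := by linarith
  have h1 : x ^ (k-1) * y ≤ y ^ k := by
    calc x ^ (k-1) * y ≤ y ^ (k-1) * y :=
          mul_le_mul_of_nonneg_right (pow_le_pow_left₀ hx0 hxy (k-1)) (by linarith)
      _ = y ^ k := by rw [← pow_succ]; congr 1; omega
  have h2 : x ^ k = x ^ (k-1) * x := by rw [← pow_succ]; congr 1; omega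
  have h3 : (1:ℝ) ≤ x ^ (k-1) := one_le_pow₀ hx
  nlinarith [h1, h2, h3]

private lemma aux_Kle {b : ℝ} (hb : 1 ≤ b) {k : ℕ} (hk : 1 ≤ k) :
    b ^ k + 2 ≤ (b+2)^k := by
  induction k with
  | zero => omega
  | succ n ih =>
    rcases Nat.eq_or_lt_of_le hk with h | h
    · simp [← h]
    · have hn : 1 ≤ n := by omega
      have := ih hn
      have h2 : (0:ℝ) ≤ b ^ n := by positivity
      have h3 : (1:ℝ) ≤ (b+2)^n := one_le_pow₀ (by linarith)
      calc b ^ (n+1) + 2 = b * b ^ n + 2 := by ring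
        _ ≤ (b+2) * ((b+2)^n) := by nlinarith
        _ = (b+2)^(n+1) := by ring

private lemma tsum_ite_lt (K : ℕ) (c : ℝ≥0∞) :
    ∑' m : ℕ, (if m < K then c else 0) = K * c := by
  rw [tsum_eq_sum (s := Finset.range K) (by intro m hm; simp [Finset.mem_range] at hm; simp [hm])]
  calc ∑ m ∈ Finset.range K, (if m < K then c else 0)
      = ∑ _m ∈ Finset.range K, c :=
        Finset.sum_congr rfl (fun m hm => by simp [Finset.mem_range.mp hm])
    _ = K * c := by simp [Finset.sum_const, nsmul_eq_mul]

private lemma measure_piece (a b : ℝ) (ha : 1 < a) (hab : a ≤ b) (d : ℝ≥0) (hd : 0 < d) :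
    μH[(d:ℝ)] ({ξ : ℝ | 1 < ξ ∧ ∀ M : ℝ, ∃ᶠ n : ℕ in atTop,
      distToNearestInt (ξ ^ n) < Real.exp (-(M * n))} ∩ Icc a b) = 0 := by
  have hb1 : (1:ℝ) < b := lt_of_lt_of_le ha hab
  set sd : ℝ := (d : ℝ) with hsddef
  have hsd : 0 < sd := by exact_mod_cast hd
  set M : ℝ := Real.log (2*(b+2)) / sd with hMdef
  have hlogpos : 0 < Real.log (2*(b+2)) := Real.log_pos (by linarith)
  have hM : 0 < M := div_pos hlogpos hsd
  have hMs : M * sd = Real.log (2*(b+2)) := div_mul_cancel₀ _ hsd.ne'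
  have hexp : Real.exp (-(M*sd)) = (2*(b+2))⁻¹ := by
    rw [Real.exp_neg, hMs, Real.exp_log (by linarith)]
  set K : ℕ → ℕ := fun k => Nat.floor (b ^ k) + 2 with hKdef
  set S : ℕ → ℕ → Set ℝ :=
    fun k m => {ξ | ξ ∈ Icc a b ∧ |ξ ^ k - (m:ℝ)| ≤ Real.exp (-(M * k))} with hSdef
  set t : ℕ → ℕ × ℕ → Set ℝ :=
    fun N p => if p.2 < K (N + p.1) then S (N + p.1) p.2 else ∅ with htdef
  set r : ℕ → ℝ≥0∞ := fun N => ENNReal.ofReal (2 * Real.exp (-(M * N))) with hrdef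
  -- diameter bound
  have hdiam : ∀ k : ℕ, 1 ≤ k → ∀ m : ℕ,
      EMetric.diam (S k m) ≤ ENNReal.ofReal (2 * Real.exp (-(M * k))) := by
    intro k hk m
    have main : ∀ x y : ℝ, x ∈ S k m → y ∈ S k m → x ≤ y →
        dist x y ≤ 2 * Real.exp (-(M*k)) := by
      intro x y hx hy hxy
      obtain ⟨⟨hx1, _⟩, hx2⟩ := hx
      obtain ⟨⟨hy1, _⟩, hy2⟩ := hy
      have h1 : (1:ℝ) ≤ x := le_of_lt (lt_of_lt_of_le ha hx1)
      have h2 : y - x ≤ y^k - x^k := aux_pow_sub h1 hxy hk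
      have h4 : |(m:ℝ) - x ^ k| ≤ Real.exp (-(M*k)) := by rw [abs_sub_comm]; exact hx2
      have h3 : y^k - x^k ≤ 2 * Real.exp (-(M*k)) := by
        have e1 := le_abs_self (y^k - (m:ℝ))
        have e2 := le_abs_self ((m:ℝ) - x^k)
        linarith [hy2, h4]
      rw [Real.dist_eq, abs_sub_comm, abs_of_nonneg (sub_nonneg.2 hxy)]
      linarith
    apply EMetric.diam_le
    intro x hx y hy
    rw [edist_dist]
    apply ENNReal.ofReal_le_ofReal
    rcases le_total x y with h | h
    · exact main x y hx hy h
    · rw [dist_comm]; exact main y x hy hx h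
  -- cover property
  have hcover : ∀ N : ℕ, 1 ≤ N →
      ({ξ : ℝ | 1 < ξ ∧ ∀ M : ℝ, ∃ᶠ n : ℕ in atTop,
        distToNearestInt (ξ ^ n) < Real.exp (-(M * n))} ∩ Icc a b) ⊆ ⋃ p, t N p := by
    intro N _ ξ hξ
    obtain ⟨⟨hξ1, hξfreq⟩, hξI⟩ := hξ
    obtain ⟨n₀, hn₀N, hdist⟩ := Filter.frequently_atTop.mp (hξfreq M) N
    have hξa : a ≤ ξ := hξI.1
    have hξb : ξ ≤ b := hξI.2
    have hξ1' : (1:ℝ) ≤ ξ := le_of_lt hξ1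
    have h1k : (1:ℝ) ≤ ξ ^ n₀ := one_le_pow₀ hξ1'
    have habs : |ξ ^ n₀ - (round (ξ ^ n₀) : ℝ)| ≤ 1/2 := abs_sub_round _
    have hrpos : (0:ℝ) < (round (ξ ^ n₀) : ℝ) := by
      have := abs_le.mp habs; linarith
    have hrpos' : 0 ≤ round (ξ ^ n₀) := by exact_mod_cast hrpos.le
    set m : ℕ := (round (ξ ^ n₀)).toNat with hmdef
    have hm : (m:ℝ) = (round (ξ ^ n₀) : ℝ) := by
      rw [hmdef]; exact_mod_cast Int.toNat_of_nonneg hrpos'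
    have hξbk : ξ ^ n₀ ≤ b ^ n₀ := pow_le_pow_left₀ (by linarith) hξb n₀
    have hmK : m < K n₀ := by
      have hfl : b ^ n₀ - 1 < (Nat.floor (b ^ n₀) : ℝ) := Nat.sub_one_lt_floor _
      have h5 : (m:ℝ) ≤ ξ ^ n₀ + 1/2 := by
        have := abs_le.mp habs; rw [hm]; linarith
      have : (m:ℝ) < (K n₀ : ℝ) := by
        rw [hKdef]; push_cast; linarith
      exact_mod_cast this
    refine Set.mem_iUnion.2 ⟨(n₀ - N, m), ?_⟩
    have hNn : N + (n₀ - N) = n₀ := by omega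
    simp only [htdef, hNn]
    rw [if_pos hmK]
    refine ⟨⟨hξa, hξb⟩, ?_⟩
    rw [hm]
    exact le_of_lt hdist
  -- summand bound
  have hsummand : ∀ k : ℕ, 1 ≤ k →
      (K k : ℝ≥0∞) * ENNReal.ofReal ((2 * Real.exp (-(M * k)))^sd) ≤
        ENNReal.ofReal (2^sd) * (ENNReal.ofReal 2⁻¹)^k := by
    intro k hk
    have hb2 : (0:ℝ) < b + 2 := by linarith
    have hek : Real.exp (-(M * k)) ^ sd = ((2*(b+2))⁻¹)^k := by
      rw [← Real.exp_mul]
      have : -(M * k) * sd = (k : ℕ) * (-(M * sd)) := by push_cast; ring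
      rw [this, Real.exp_nat_mul, hexp]
    have hmul : (2 * Real.exp (-(M * k)))^sd = 2^sd * ((2*(b+2))⁻¹)^k := by
      rw [Real.mul_rpow (by norm_num) (Real.exp_nonneg _), hek]
    have hKr : (K k : ℝ) ≤ (b+2)^k := by
      have h1 : ((Nat.floor (b ^ k) : ℝ)) ≤ b ^ k := Nat.floor_le (by positivity)
      have h2 := aux_Kle hb1.le hk
      rw [hKdef]; push_cast; linarith
    have hcancel : ((2*(b+2))⁻¹)^k * (b+2)^k = (2:ℝ)⁻¹^k := by
      rw [← mul_pow]
      congr 1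
      rw [mul_inv]
      rw [mul_assoc, inv_mul_cancel₀ (by linarith : (b:ℝ)+2 ≠ 0), mul_one]
    have hreal : (K k : ℝ) * (2 * Real.exp (-(M * k)))^sd ≤ 2^sd * 2⁻¹^k := by
      rw [hmul]
      have hnn : (0:ℝ) ≤ 2^sd * ((2*(b+2))⁻¹)^k := by positivity
      calc (K k : ℝ) * (2^sd * ((2*(b+2))⁻¹)^k)
          ≤ (b+2)^k * (2^sd * ((2*(b+2))⁻¹)^k) := mul_le_mul_of_nonneg_right hKr hnn
        _ = 2^sd * (((2*(b+2))⁻¹)^k * (b+2)^k) := by ring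
        _ = 2^sd * 2⁻¹^k := by rw [hcancel]
    calc (K k : ℝ≥0∞) * ENNReal.ofReal ((2 * Real.exp (-(M * k)))^sd)
        = ENNReal.ofReal ((K k : ℝ) * (2 * Real.exp (-(M * k)))^sd) := by
          rw [ENNReal.ofReal_mul (by positivity), ENNReal.ofReal_natCast]
      _ ≤ ENNReal.ofReal (2^sd * 2⁻¹^k) := ENNReal.ofReal_le_ofReal hreal
      _ = ENNReal.ofReal (2^sd) * (ENNReal.ofReal 2⁻¹)^k := by
          rw [ENNReal.ofReal_mul (by positivity), ENNReal.ofReal_pow (by norm_num)]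
  -- geometric data
  set q : ℝ≥0∞ := ENNReal.ofReal 2⁻¹ with hqdef
  have hq1 : q < 1 := by rw [hqdef]; exact ENNReal.ofReal_lt_one.2 (by norm_num)
  set C : ℝ≥0∞ := ENNReal.ofReal (2^sd) * (1 - q)⁻¹ with hCdef
  have hC : C ≠ ⊤ := by
    apply ENNReal.mul_ne_top ENNReal.ofReal_ne_top
    rw [ENNReal.inv_ne_top]
    exact (tsub_pos_of_lt hq1).ne'
  -- total sum bound
  have hsum : ∀ N : ℕ, 1 ≤ N →
      ∑' p : ℕ × ℕ, EMetric.diam (t N p) ^ sd ≤ C * q ^ N := by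
    intro N hN
    have step1 : ∑' p : ℕ × ℕ, EMetric.diam (t N p) ^ sd ≤
        ∑' p : ℕ × ℕ, (if p.2 < K (N + p.1) then
          ENNReal.ofReal ((2 * Real.exp (-(M * ((N + p.1 : ℕ) : ℝ))))^sd) else 0) := by
      apply ENNReal.tsum_le_tsum
      intro p
      by_cases h : p.2 < K (N + p.1)
      · simp only [htdef, if_pos h]
        calc EMetric.diam (S (N + p.1) p.2) ^ sd
            ≤ (ENNReal.ofReal (2 * Real.exp (-(M * ((N + p.1 : ℕ) : ℝ))))) ^ sd :=
              ENNReal.rpow_le_rpow (hdiam (N + p.1) (by omega) p.2) hsd.le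
          _ = ENNReal.ofReal ((2 * Real.exp (-(M * ((N + p.1 : ℕ) : ℝ))))^sd) := by
              rw [ENNReal.ofReal_rpow_of_pos (by positivity)]
      · simp only [htdef, if_neg h, EMetric.diam_empty]
        rw [show EMetric.diam (∅ : Set ℝ) = 0 from Metric.ediam_empty, ENNReal.zero_rpow_of_pos hsd]
    have step2 : ∑' p : ℕ × ℕ, (if p.2 < K (N + p.1) then
          ENNReal.ofReal ((2 * Real.exp (-(M * ((N + p.1 : ℕ) : ℝ))))^sd) else 0) =
        ∑' n : ℕ, (K (N + n) : ℝ≥0∞) *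
          ENNReal.ofReal ((2 * Real.exp (-(M * ((N + n : ℕ) : ℝ))))^sd) := by
      rw [ENNReal.tsum_prod (f := fun n m => (if m < K (N + n) then
          ENNReal.ofReal ((2 * Real.exp (-(M * ((N + n : ℕ) : ℝ))))^sd) else 0))]
      exact tsum_congr fun n => tsum_ite_lt _ _
    have step3 : ∑' n : ℕ, (K (N + n) : ℝ≥0∞) *
          ENNReal.ofReal ((2 * Real.exp (-(M * ((N + n : ℕ) : ℝ))))^sd) ≤
        ∑' n : ℕ, ENNReal.ofReal (2^sd) * q ^ (N + n) := by
      exact ENNReal.tsum_le_tsum fun n => hsummand (N + n) (by omega)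
    have step4 : ∑' n : ℕ, ENNReal.ofReal (2^sd) * q ^ (N + n) = C * q ^ N := by
      have : ∀ n : ℕ, ENNReal.ofReal (2^sd) * q ^ (N + n) =
          (ENNReal.ofReal (2^sd) * q ^ N) * q ^ n := by
        intro n; rw [pow_add]; ring
      rw [tsum_congr this, ENNReal.tsum_mul_left, ENNReal.tsum_geometric, hCdef]
      ring
    calc ∑' p : ℕ × ℕ, EMetric.diam (t N p) ^ sd
        ≤ _ := step1
      _ = _ := step2
      _ ≤ _ := step3
      _ = C * q ^ N := step4
  -- tendsto facts
  have hr0 : Tendsto r atTop (𝓝 0) := by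
    have l1 : Tendsto (fun N : ℕ => M * (N:ℝ)) atTop atTop :=
      Tendsto.const_mul_atTop hM tendsto_natCast_atTop_atTop
    have l2 : Tendsto (fun N : ℕ => -(M * (N:ℝ))) atTop atBot :=
      tendsto_neg_atTop_atBot.comp l1
    have l3 : Tendsto (fun N : ℕ => 2 * Real.exp (-(M * (N:ℝ)))) atTop (𝓝 (2 * 0)) :=
      (Real.tendsto_exp_atBot.comp l2).const_mul 2
    rw [mul_zero] at l3
    have := (ENNReal.continuous_ofReal.tendsto 0).comp l3
    rw [ENNReal.ofReal_zero] at this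
    exact this
  have ht : ∀ᶠ N in atTop, ∀ p : ℕ × ℕ, EMetric.diam (t N p) ≤ r N := by
    filter_upwards [eventually_ge_atTop 1] with N hN p
    by_cases h : p.2 < K (N + p.1)
    · simp only [htdef, if_pos h]
      refine le_trans (hdiam (N + p.1) (by omega) p.2) ?_
      apply ENNReal.ofReal_le_ofReal
      have hc : (N:ℝ) ≤ ((N + p.1 : ℕ) : ℝ) := by exact_mod_cast Nat.le_add_right N p.1
      have h2 : Real.exp (-(M * ((N + p.1 : ℕ):ℝ))) ≤ Real.exp (-(M * (N:ℝ))) :=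
        Real.exp_le_exp.mpr (by nlinarith)
      have h3 := Real.exp_pos (-(M * ((N + p.1 : ℕ):ℝ)))
      linarith
    · simp only [htdef, if_neg h, EMetric.diam_empty]
      rw [show EMetric.diam (∅ : Set ℝ) = 0 from Metric.ediam_empty]; exact zero_le
  have hst : ∀ᶠ N in atTop,
      ({ξ : ℝ | 1 < ξ ∧ ∀ M : ℝ, ∃ᶠ n : ℕ in atTop,
        distToNearestInt (ξ ^ n) < Real.exp (-(M * n))} ∩ Icc a b) ⊆ ⋃ p, t N p :=
    (eventually_ge_atTop 1).mono hcover
  have hμ := Measure.hausdorffMeasure_le_liminf_tsum sd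
    ({ξ : ℝ | 1 < ξ ∧ ∀ M : ℝ, ∃ᶠ n : ℕ in atTop,
      distToNearestInt (ξ ^ n) < Real.exp (-(M * n))} ∩ Icc a b) r hr0 t ht hst
  have hg : Tendsto (fun N : ℕ => C * q ^ N) atTop (𝓝 0) := by
    have := ENNReal.Tendsto.const_mul (a := C)
      (ENNReal.tendsto_pow_atTop_nhds_zero_of_lt_one hq1) (Or.inr hC)
    simpa using this
  have hlim : liminf (fun N : ℕ => ∑' p : ℕ × ℕ, EMetric.diam (t N p) ^ sd) atTop ≤ 0 := by
    calc liminf (fun N : ℕ => ∑' p : ℕ × ℕ, EMetric.diam (t N p) ^ sd) atTop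
        ≤ liminf (fun N : ℕ => C * q ^ N) atTop :=
          liminf_le_liminf ((eventually_ge_atTop 1).mono hsum)
      _ = 0 := hg.liminf_eq
  exact le_zero_iff.mp (hμ.trans hlim)

private lemma dimH_piece (a b : ℝ) (ha : 1 < a) (hab : a ≤ b) :
    dimH ({ξ : ℝ | 1 < ξ ∧ ∀ M : ℝ, ∃ᶠ n : ℕ in atTop,
      distToNearestInt (ξ ^ n) < Real.exp (-(M * n))} ∩ Icc a b) = 0 := by
  refine le_antisymm ?_ zero_le
  refine ENNReal.le_of_forall_pos_le_add fun ε hε _ => ?_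
  rw [zero_add]
  exact dimH_le_of_hausdorffMeasure_ne_top
    (by rw [measure_piece a b ha hab ε hε]; exact ENNReal.zero_ne_top)

/-- The set of real numbers `ξ > 1` with `ν(ξ) = limsup (-log ‖ξ^n‖)/n = +∞`
(with the convention `-log 0 = +∞`, so `ν(ξ) = +∞` is expressed as: for every `M`,
`‖ξ^n‖ < e^(-Mn)` for infinitely many `n`) has Hausdorff dimension zero. -/
theorem dimH_infinite_nu_eq_zero :
    dimH {ξ : ℝ | 1 < ξ ∧ ∀ M : ℝ, ∃ᶠ n : ℕ in atTop,
      distToNearestInt (ξ ^ n) < Real.exp (-(M * n))} = 0 := by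
  have hsub : {ξ : ℝ | 1 < ξ ∧ ∀ M : ℝ, ∃ᶠ n : ℕ in atTop,
      distToNearestInt (ξ ^ n) < Real.exp (-(M * n))} ⊆
      ⋃ k : ℕ, ({ξ : ℝ | 1 < ξ ∧ ∀ M : ℝ, ∃ᶠ n : ℕ in atTop,
        distToNearestInt (ξ ^ n) < Real.exp (-(M * n))} ∩
        Icc (1 + ((k:ℝ)+1)⁻¹) ((k:ℝ)+2)) := by
    intro ξ hξ
    have hξ1 : 1 < ξ := hξ.1
    have hpos : 0 < ξ - 1 := by linarith
    obtain ⟨k1, hk1⟩ := exists_nat_gt (ξ-1)⁻¹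
    obtain ⟨k2, hk2⟩ := exists_nat_gt ξ
    refine Set.mem_iUnion.2 ⟨k1 + k2, hξ, ?_, ?_⟩
    · have hc : (0:ℝ) < ((k1 + k2 : ℕ):ℝ) + 1 := by positivity
      have h1 : (ξ-1)⁻¹ < ((k1 + k2 : ℕ):ℝ) + 1 := by
        push_cast; push_cast at hk1; linarith [Nat.cast_nonneg (α := ℝ) k2]
      have h2 : (((k1 + k2 : ℕ):ℝ) + 1)⁻¹ < ξ - 1 := (inv_lt_comm₀ hpos hc).mp h1
      linarith
    · push_cast; push_cast at hk2; linarith [Nat.cast_nonneg (α := ℝ) k1]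
  refine le_antisymm ?_ zero_le
  calc dimH {ξ : ℝ | 1 < ξ ∧ ∀ M : ℝ, ∃ᶠ n : ℕ in atTop,
        distToNearestInt (ξ ^ n) < Real.exp (-(M * n))}
      ≤ dimH (⋃ k : ℕ, ({ξ : ℝ | 1 < ξ ∧ ∀ M : ℝ, ∃ᶠ n : ℕ in atTop,
          distToNearestInt (ξ ^ n) < Real.exp (-(M * n))} ∩
          Icc (1 + ((k:ℝ)+1)⁻¹) ((k:ℝ)+2))) := dimH_mono hsub
    _ = ⨆ k : ℕ, dimH ({ξ : ℝ | 1 < ξ ∧ ∀ M : ℝ, ∃ᶠ n : ℕ in atTop,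
          distToNearestInt (ξ ^ n) < Real.exp (-(M * n))} ∩
          Icc (1 + ((k:ℝ)+1)⁻¹) ((k:ℝ)+2)) := dimH_iUnion _
    _ = 0 := by
      have : ∀ k : ℕ, dimH ({ξ : ℝ | 1 < ξ ∧ ∀ M : ℝ, ∃ᶠ n : ℕ in atTop,
          distToNearestInt (ξ ^ n) < Real.exp (-(M * n))} ∩
          Icc (1 + ((k:ℝ)+1)⁻¹) ((k:ℝ)+2)) = 0 := by
        intro k
        apply dimH_piece
        · have : (0:ℝ) < ((k:ℝ)+1)⁻¹ := by positivity
          linarith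
        · have h1 : ((k:ℝ)+1)⁻¹ ≤ 1 := by
            rw [inv_le_one_iff₀]; right; linarith [Nat.cast_nonneg (α := ℝ) k]
          linarith [Nat.cast_nonneg (α := ℝ) k]
      simp only [this, iSup_const]
end

section
/- Let m be a positive integer and let α be a real algebraic integer greater than 1 of degree 2m whose minimal polynomial over ℚ is g(X^m), where g(X) = X² − uX − v with u, v integers and v ≠ 0, and assume that every Galois conjugate of α other than α itself lies in the open unit disc of ℂ. Then there exists a positive integer n₀ such that for every positive integer n ≥ n₀ that is a multiple of m, one has ‖α^n‖ = |v|^(n/m) · α^(−n). -/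
/-- Let `m ≥ 1` and let `α > 1` be a real algebraic integer of degree `2m` whose minimal
polynomial over `ℚ` is `g(X^m)` with `g(X) = X² - uX - v`, `u, v` integers, `v ≠ 0`,
and all of whose Galois conjugates other than `α` lie in the open unit disc. Then for
all sufficiently large `n` divisible by `m`, `‖α^n‖ = |v|^(n/m) · α^(-n)`. -/
theorem pisot_from_quadratic_fractional_parts (m : ℕ) (hm : 0 < m)
    (α : ℝ) (hα1 : 1 < α) (hint : IsIntegral ℤ α)
    (u v : ℤ) (hv : v ≠ 0)
    (hminpoly : minpoly ℚ α =
      (Polynomial.X ^ 2 - Polynomial.C (u : ℚ) * Polynomial.X - Polynomial.C (v : ℚ)).comp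
        (Polynomial.X ^ m))
    (hdeg : (minpoly ℚ α).natDegree = 2 * m)
    (hconj : ∀ z : ℂ, Polynomial.aeval z (minpoly ℚ α) = 0 → z ≠ (α : ℂ) →
      ‖z‖ < 1) :
    ∃ n₀ : ℕ, 0 < n₀ ∧ ∀ n : ℕ, n₀ ≤ n → m ∣ n →
      distToNearestInt (α ^ n) = (|v| : ℝ) ^ (n / m) * α ^ (-(n : ℤ)) := by
  set β : ℝ := α ^ m with hβdef
  have hβ1 : 1 < β := one_lt_pow₀ hα1 hm.ne'
  have hβ0 : 0 < β := lt_trans one_pos hβ1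
  have hroot : β ^ 2 - u * β - v = 0 := by
    have h := minpoly.aeval ℚ α
    rw [hminpoly] at h
    simpa [Polynomial.aeval_comp] using h
  set γ : ℝ := (u : ℝ) - β with hγdef
  have hγroot : γ ^ 2 - u * γ - v = 0 := by
    rw [hγdef]; linear_combination hroot
  have hprod : β * γ = -v := by
    rw [hγdef]; linear_combination -hroot
  have hγ0 : γ ≠ 0 := by
    intro h
    rw [h, mul_zero] at hprod
    exact hv (by exact_mod_cast (neg_eq_zero.mp hprod.symm))
  have hβγ : β ≠ γ := by
    intro h
    -- then β = u/2 ∈ ℚ and α is a root of X^m - C (u/2), degree m < 2m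
    have hb : β = (u : ℝ) / 2 := by rw [hγdef] at h; linarith
    have hmon : (Polynomial.X ^ m - Polynomial.C ((u : ℚ) / 2)).Monic :=
      Polynomial.monic_X_pow_sub_C _ hm.ne'
    have haev : Polynomial.aeval α (Polynomial.X ^ m - Polynomial.C ((u : ℚ) / 2)) = 0 := by
      simp only [map_sub, Polynomial.aeval_X_pow, Polynomial.aeval_C]
      rw [← hβdef, hb]
      push_cast
      norm_num
    have hle := minpoly.min ℚ α hmon haev
    have hdg : (Polynomial.X ^ m - Polynomial.C ((u : ℚ) / 2)).degree = (m : WithBot ℕ) :=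
      Polynomial.degree_X_pow_sub_C hm ((u : ℚ) / 2)
    rw [hdg] at hle
    have := Polynomial.natDegree_le_iff_degree_le.mpr hle
    omega
  -- |γ| < 1
  obtain ⟨z, hz⟩ : ∃ z : ℂ, z ^ m = (γ : ℂ) := IsAlgClosed.exists_pow_nat_eq _ hm
  have hγlt : |γ| < 1 := by
    have hzroot : Polynomial.aeval z (minpoly ℚ α) = 0 := by
      rw [hminpoly, Polynomial.aeval_comp]
      simp only [Polynomial.aeval_X_pow, hz, map_sub, map_mul, map_pow, Polynomial.aeval_X,
        Polynomial.aeval_C, eq_ratCast]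
      have h := congrArg (fun x : ℝ => (x : ℂ)) hγroot
      push_cast at h ⊢
      linear_combination h
    have hzne : z ≠ (α : ℂ) := by
      intro h
      apply hβγ
      have : (β : ℂ) = (γ : ℂ) := by
        rw [← hz, h, hβdef]; push_cast; ring
      exact_mod_cast this
    have habs := hconj z hzroot hzne
    have : ‖(γ : ℂ)‖ < 1 := by
      rw [← hz, norm_pow]
      exact pow_lt_one₀ (by positivity) habs hm.ne'
    simpa using this
  -- integer sequence
  have key : ∀ k : ℕ, (∃ N : ℤ, β ^ k + γ ^ k = (N : ℝ)) ∧
      (∃ N : ℤ, β ^ (k + 1) + γ ^ (k + 1) = (N : ℝ)) := by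
    intro k
    induction k with
    | zero => exact ⟨⟨2, by norm_num⟩, ⟨u, by push_cast; rw [hγdef]; ring⟩⟩
    | succ k ih =>
      obtain ⟨⟨N, hN⟩, ⟨M, hM⟩⟩ := ih
      refine ⟨⟨M, hM⟩, ⟨u * M + v * N, ?_⟩⟩
      push_cast
      linear_combination (β ^ k) * hroot + (γ ^ k) * hγroot + (v : ℝ) * hN + (u : ℝ) * hM
  -- choose n₀
  obtain ⟨K, hK⟩ := exists_pow_lt_of_lt_one (by norm_num : (0:ℝ) < 1/2) hγlt
  refine ⟨m * K + 1, Nat.succ_pos _, ?_⟩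
  intro n hn hdvd
  obtain ⟨k, rfl⟩ := hdvd
  have hkK : K ≤ k := by
    rcases le_or_gt K k with h | h
    · exact h
    · exfalso
      have h2 : m * (k + 1) ≤ m * K := Nat.mul_le_mul_left m h
      rw [Nat.mul_succ] at h2
      linarith
  have hsmall : |γ| ^ k < 1 / 2 :=
    lt_of_le_of_lt (pow_le_pow_of_le_one (abs_nonneg _) hγlt.le hkK) hK
  have hαn : α ^ (m * k) = β ^ k := by rw [hβdef, ← pow_mul]
  obtain ⟨N, hN⟩ := (key k).1
  have heq : α ^ (m * k) = (N : ℝ) - γ ^ k := by rw [hαn]; linarith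
  have hround : round (α ^ (m * k)) = N := by
    rw [heq, sub_eq_add_neg, add_comm, round_add_intCast]
    have h1 : |γ ^ k| < 1 / 2 := by rw [abs_pow]; exact hsmall
    have h2 := abs_lt.mp h1
    rw [round_eq_zero_iff.mpr ⟨by simp; linarith [h2.2], by simp; linarith [h2.1]⟩]
    simp
  have hd : distToNearestInt (α ^ (m * k)) = |γ| ^ k := by
    rw [distToNearestInt, hround, heq]
    rw [show (N : ℝ) - γ ^ k - N = -(γ ^ k) by ring, abs_neg, abs_pow]
  rw [hd]
  have hγabs : |γ| = |(v : ℝ)| / β := by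
    have : γ = -v / β := by field_simp at hprod ⊢; linarith [hprod]
    rw [this, abs_div, abs_neg, abs_of_pos hβ0]
  have hdiv : m * k / m = k := Nat.mul_div_cancel_left k hm
  rw [hγabs, div_pow, hdiv, hβdef, ← pow_mul]
  rw [zpow_neg, zpow_natCast]
  push_cast
  rw [div_eq_mul_inv]
end
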